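/- arXiv:2108.09585 — 9 statements merged into one kernel-verified Lean document; each statement's English description precedes it below -/
import Mathlib

section
/- Extended Porteus theorem for SEP-POMDPs. Assume: (P(a)) Ṽ is as given (nonempty and closed under pointwise convergence); (P(b)) for every bounded v : S × B → ℝ such that v(·, b) ∈ Ṽ for every b ∈ B, also (Hv)(·, b) ∈ Ṽ for every b ∈ B; (P(c)) for every bounded v : S × B → ℝ such that v(·, b) ∈ Ṽ for every b ∈ B, and for every b ∈ B, there exists π_b ∈ Π̃ with (Hv)(s, b) = Σ_{y'} σ(y' | b) * h_{y'}(s, π_b s, v(·, λ(y', b))) for all s ∈ S. Then the unique bounded fixed point v* of H satisfies v*(·, b) ∈ Ṽ for every b ∈ B, and for every b ∈ B there exists π*_b ∈ Π̃ such that v*(s, b) = Σ_{y'} σ(y' | b) * h_{y'}(s, π*_b s, v*(·, λ(y', b))) for all s ∈ S. -/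
open Finset

/-- The belief simplex over the modulation space `M`. -/
abbrev Belief (M : Type) [Fintype M] : Type :=
  {b : M → ℝ // (∀ μ, 0 ≤ b μ) ∧ ∑ μ, b μ = 1}

/-- A finite SEP-POMDP: feasible action sets, cost function, state transition
probabilities, modulation/observation probabilities, and a discount factor. -/
structure SEP (S Y M A : Type) [Fintype S] [Fintype Y] [Fintype M] [Fintype A] where
  act : S → Finset A
  act_ne : ∀ s, (act s).Nonempty
  c : S → Y → A → ℝ
  p : Y → S → A → S → ℝ
  p_nonneg : ∀ y' s a s', 0 ≤ p y' s a s'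
  p_sum : ∀ y' s a, ∑ s', p y' s a s' = 1
  Q : M → Y → M → ℝ
  Q_nonneg : ∀ μ y' μ', 0 ≤ Q μ y' μ'
  Q_sum : ∀ μ, ∑ y', ∑ μ', Q μ y' μ' = 1
  β : ℝ
  β_nonneg : 0 ≤ β
  β_lt_one : β < 1

namespace SEP

variable {S Y M A : Type} [Fintype S] [Fintype Y] [Fintype M] [Fintype A]

/-- `σ(y' | b) = ∑ μ, ∑ μ', b μ * Q μ y' μ'`. -/
def sig (P : SEP S Y M A) (b : Belief M) (y' : Y) : ℝ :=
  ∑ μ, ∑ μ', b.1 μ * P.Q μ y' μ'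

/-- The Bayesian belief update `λ(y', b)`. -/
noncomputable def lam (P : SEP S Y M A) (y' : Y) (b : Belief M) : Belief M :=
  if h : 0 < P.sig b y' then
    ⟨fun μ' => (∑ μ, b.1 μ * P.Q μ y' μ') / P.sig b y',
      fun μ' => div_nonneg (Finset.sum_nonneg fun μ _ =>
        mul_nonneg (b.2.1 μ) (P.Q_nonneg μ y' μ')) h.le,
      by
        rw [← Finset.sum_div, Finset.sum_comm]
        exact div_self (ne_of_gt h)⟩
  else b

/-- `h_{y'}(s, a, v̄) = c s y' a + β * ∑ s', p y' s a s' * v̄ s'`. -/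
def hy (P : SEP S Y M A) (y' : Y) (s : S) (a : A) (vb : S → ℝ) : ℝ :=
  P.c s y' a + P.β * ∑ s', P.p y' s a s' * vb s'

/-- The Bellman operator `H` of the SEP-POMDP. -/
noncomputable def H (P : SEP S Y M A) (v : S → Belief M → ℝ) (s : S) (b : Belief M) : ℝ :=
  (P.act s).inf' (P.act_ne s) fun a =>
    ∑ y', P.sig b y' * P.hy y' s a fun s' => v s' (P.lam y' b)

/-- Boundedness of a function `v : S × B → ℝ`. -/
def Bdd (v : S → Belief M → ℝ) : Prop :=
  ∃ C, ∀ s b, |v s b| ≤ C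

end SEP


section Aux
variable {S Y M A : Type} [Fintype S] [Fintype Y] [Fintype M] [Fintype A]

lemma sig_nonneg' (P : SEP S Y M A) (b : Belief M) (y' : Y) : 0 ≤ P.sig b y' :=
  Finset.sum_nonneg fun μ _ => Finset.sum_nonneg fun μ' _ =>
    mul_nonneg (b.2.1 μ) (P.Q_nonneg μ y' μ')

lemma sig_sum' (P : SEP S Y M A) (b : Belief M) : ∑ y', P.sig b y' = 1 := by
  unfold SEP.sig
  rw [Finset.sum_comm]
  have h : ∀ μ : M, ∑ y', ∑ μ', b.1 μ * P.Q μ y' μ' = b.1 μ := by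
    intro μ
    simp_rw [← Finset.mul_sum]
    rw [P.Q_sum μ, mul_one]
  simp_rw [h]
  exact b.2.2

lemma abs_inf'_sub_inf'_le' {α : Type} (t : Finset α) (ht : t.Nonempty)
    (f g : α → ℝ) (ε : ℝ) (h : ∀ a ∈ t, |f a - g a| ≤ ε) :
    |t.inf' ht f - t.inf' ht g| ≤ ε := by
  rw [abs_sub_le_iff]
  constructor
  · obtain ⟨a, ha, hga⟩ := t.exists_mem_eq_inf' ht g
    have h1 := (abs_sub_le_iff.mp (h a ha)).1
    have h2 : t.inf' ht f ≤ f a := Finset.inf'_le _ ha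
    rw [hga]; linarith
  · obtain ⟨a, ha, hfa⟩ := t.exists_mem_eq_inf' ht f
    have h1 := (abs_sub_le_iff.mp (h a ha)).2
    have h2 : t.inf' ht g ≤ g a := Finset.inf'_le _ ha
    rw [hfa]; linarith

lemma H_contract' (P : SEP S Y M A) (v w : S → Belief M → ℝ) (C : ℝ)
    (hC : ∀ s b, |v s b - w s b| ≤ C) (s : S) (b : Belief M) :
    |P.H v s b - P.H w s b| ≤ P.β * C := by
  apply abs_inf'_sub_inf'_le'
  intro a _
  have key : (∑ y', P.sig b y' * P.hy y' s a fun s' => v s' (P.lam y' b)) -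
      (∑ y', P.sig b y' * P.hy y' s a fun s' => w s' (P.lam y' b)) =
      ∑ y', P.sig b y' * (P.β * ∑ s', P.p y' s a s' *
        (v s' (P.lam y' b) - w s' (P.lam y' b))) := by
    rw [← Finset.sum_sub_distrib]
    refine Finset.sum_congr rfl fun y' _ => ?_
    rw [← mul_sub]
    congr 1
    unfold SEP.hy
    have hs : (∑ s', P.p y' s a s' * (v s' (P.lam y' b) - w s' (P.lam y' b))) =
        (∑ s', P.p y' s a s' * v s' (P.lam y' b)) -
        ∑ s', P.p y' s a s' * w s' (P.lam y' b) := by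
      rw [← Finset.sum_sub_distrib]
      exact Finset.sum_congr rfl fun s' _ => mul_sub _ _ _
    rw [hs]; simp only []; ring
  rw [key]
  calc |∑ y', P.sig b y' * (P.β * ∑ s', P.p y' s a s' *
        (v s' (P.lam y' b) - w s' (P.lam y' b)))|
      ≤ ∑ y', |P.sig b y' * (P.β * ∑ s', P.p y' s a s' *
        (v s' (P.lam y' b) - w s' (P.lam y' b)))| := Finset.abs_sum_le_sum_abs _ _
    _ ≤ ∑ y' : Y, P.sig b y' * (P.β * C) := by
        refine Finset.sum_le_sum fun y' _ => ?_
        rw [abs_mul, abs_of_nonneg (sig_nonneg' P b y'), abs_mul,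
          abs_of_nonneg P.β_nonneg]
        refine mul_le_mul_of_nonneg_left ?_ (sig_nonneg' P b y')
        refine mul_le_mul_of_nonneg_left ?_ P.β_nonneg
        calc |∑ s', P.p y' s a s' * (v s' (P.lam y' b) - w s' (P.lam y' b))|
            ≤ ∑ s', |P.p y' s a s' * (v s' (P.lam y' b) - w s' (P.lam y' b))| :=
              Finset.abs_sum_le_sum_abs _ _
          _ ≤ ∑ s' : S, P.p y' s a s' * C := by
              refine Finset.sum_le_sum fun s' _ => ?_
              rw [abs_mul, abs_of_nonneg (P.p_nonneg y' s a s')]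
              exact mul_le_mul_of_nonneg_left (hC _ _) (P.p_nonneg y' s a s')
          _ = C := by rw [← Finset.sum_mul, P.p_sum, one_mul]
    _ = P.β * C := by rw [← Finset.sum_mul, sig_sum' P b, one_mul]

end Aux

/-- **Extended Porteus theorem for SEP-POMDPs.** Under P(a) (the structured set
`Vt` is nonempty and closed in the topology of pointwise convergence), P(b)
(structured value preservation) and P(c) (structured policy attainment), the
unique bounded fixed point `vstar` of the Bellman operator `H` is structured
in `s` for every belief, and for every belief there is a structured policy
attaining the minimum. -/
theorem extended_porteus {S Y M A : Type} [Fintype S] [Fintype Y] [Fintype M] [Fintype A]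
    [Nonempty S] [Nonempty Y] [Nonempty M] [Nonempty A]
    (P : SEP S Y M A)
    (Vt : Set (S → ℝ)) (hVne : Vt.Nonempty) (hVclosed : IsClosed Vt)
    (Pt : Set (S → A)) (hPt : ∀ π ∈ Pt, ∀ s, π s ∈ P.act s)
    -- P(b): structured value preservation
    (hPb : ∀ v : S → Belief M → ℝ, SEP.Bdd v →
      (∀ b, (fun s => v s b) ∈ Vt) → ∀ b, (fun s => P.H v s b) ∈ Vt)
    -- P(c): structured policy attainment
    (hPc : ∀ v : S → Belief M → ℝ, SEP.Bdd v →
      (∀ b, (fun s => v s b) ∈ Vt) → ∀ b : Belief M, ∃ π ∈ Pt, ∀ s,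
        P.H v s b = ∑ y', P.sig b y' * P.hy y' s (π s) fun s' => v s' (P.lam y' b))
    -- the unique bounded fixed point of H
    (vstar : S → Belief M → ℝ) (hbdd : SEP.Bdd vstar)
    (hfix : ∀ s b, vstar s b = P.H vstar s b) :
    (∀ b, (fun s => vstar s b) ∈ Vt) ∧
    ∀ b : Belief M, ∃ π ∈ Pt, ∀ s,
      vstar s b = ∑ y', P.sig b y' * P.hy y' s (π s) fun s' => vstar s' (P.lam y' b) := by
  classical
  -- part 1: vstar(·, b) ∈ Vt via iteration + closedness
  obtain ⟨w0, hw0⟩ := hVne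
  obtain ⟨Cs, hCs⟩ := id hbdd
  set v0 : S → Belief M → ℝ := fun s _ => w0 s with hv0
  have hv0bdd : SEP.Bdd v0 := by
    refine ⟨∑ s : S, |w0 s|, fun s b => ?_⟩
    exact Finset.single_le_sum (f := fun s => |w0 s|)
      (fun s _ => abs_nonneg _) (Finset.mem_univ s)
  obtain ⟨C0', hC0'⟩ := hv0bdd
  set C0 : ℝ := |C0'| + |Cs| with hC0def
  have hC0 : ∀ s b, |v0 s b - vstar s b| ≤ C0 := fun s b => by
    calc |v0 s b - vstar s b| ≤ |v0 s b| + |vstar s b| := abs_sub _ _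
      _ ≤ |C0'| + |Cs| := add_le_add ((hC0' s b).trans (le_abs_self _))
          ((hCs s b).trans (le_abs_self _))
  have hC0nn : 0 ≤ C0 := add_nonneg (abs_nonneg _) (abs_nonneg _)
  set seq : ℕ → (S → Belief M → ℝ) := fun n => P.H^[n] v0 with hseq
  have hseqsucc : ∀ n, seq (n + 1) = P.H (seq n) := fun n => by
    simp only [hseq, Function.iterate_succ_apply']
  have key : ∀ n, (∀ s b, |seq n s b - vstar s b| ≤ P.β ^ n * C0) ∧
      (∀ b, (fun s => seq n s b) ∈ Vt) := by
    intro n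
    induction n with
    | zero => exact ⟨fun s b => by simpa [hseq] using hC0 s b, fun b => hw0⟩
    | succ n ih =>
      have hbddn : SEP.Bdd (seq n) := by
        refine ⟨P.β ^ n * C0 + Cs, fun s b => ?_⟩
        calc |seq n s b| ≤ |seq n s b - vstar s b| + |vstar s b| := by
              have := abs_sub_abs_le_abs_sub (seq n s b) (vstar s b); linarith [abs_sub_abs_le_abs_sub (seq n s b) (vstar s b), abs_nonneg (vstar s b)]
          _ ≤ P.β ^ n * C0 + Cs := add_le_add (ih.1 s b) (hCs s b)
      constructor
      · intro s b
        rw [hseqsucc]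
        have := H_contract' P (seq n) vstar (P.β ^ n * C0) ih.1 s b
        rw [← hfix s b] at this
        calc |P.H (seq n) s b - vstar s b| ≤ P.β * (P.β ^ n * C0) := this
          _ = P.β ^ (n + 1) * C0 := by ring
      · intro b
        rw [hseqsucc]
        exact hPb (seq n) hbddn ih.2 b
  have part1 : ∀ b, (fun s => vstar s b) ∈ Vt := by
    intro b
    have ht : Filter.Tendsto (fun n => fun s => seq n s b) Filter.atTop
        (nhds fun s => vstar s b) := by
      rw [tendsto_pi_nhds]
      intro s
      rw [← tendsto_sub_nhds_zero_iff]
      have h0 : Filter.Tendsto (fun n => P.β ^ n * C0) Filter.atTop (nhds 0) := by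
        have := tendsto_pow_atTop_nhds_zero_of_lt_one P.β_nonneg P.β_lt_one
        simpa using this.mul_const C0
      have habs : Filter.Tendsto (fun n => |seq n s b - vstar s b|)
          Filter.atTop (nhds 0) :=
        squeeze_zero (fun n => abs_nonneg _) (fun n => (key n).1 s b) h0
      exact (tendsto_zero_iff_abs_tendsto_zero _).mpr habs
    exact hVclosed.mem_of_tendsto ht (Filter.Eventually.of_forall fun n => (key n).2 b)
  refine ⟨part1, fun b => ?_⟩
  obtain ⟨π, hπ, hπeq⟩ := hPc vstar hbdd part1 b
  exact ⟨π, hπ, fun s => (hfix s b).trans (hπeq s)⟩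
end

section
/- Porteus theorem for the completely observed MDP analog. Fix y' ∈ Y. Assume: (P(a)) Ṽ is as given (nonempty and closed under pointwise convergence); (P_{y'}(b)) v̄ ∈ Ṽ implies H̄_{y'} v̄ ∈ Ṽ; (P_{y'}(c)) for every v̄ ∈ Ṽ there exists π̃ ∈ Π̃ with (H̄_{y'} v̄)(s) = h_{y'}(s, π̃ s, v̄) for all s ∈ S. Then the unique fixed point v*_{y'} of H̄_{y'} lies in Ṽ, and there exists π*_{y'} ∈ Π̃ such that v*_{y'}(s) = h_{y'}(s, π*_{y'} s, v*_{y'}) for all s ∈ S. -/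
open Finset

/-- The MDP-analog operator `H̄_{y'}` for a fixed observation `y'`. -/
noncomputable def SEP.Hbar {S Y M A : Type} [Fintype S] [Fintype Y] [Fintype M] [Fintype A]
    (P : SEP S Y M A) (y' : Y) (vb : S → ℝ) (s : S) : ℝ :=
  (P.act s).inf' (P.act_ne s) fun a => P.hy y' s a vb

/-- **Porteus theorem for the completely observed MDP analog.** Under P(a),
P_{y'}(b) and P_{y'}(c), the unique fixed point `vstar` of `H̄_{y'}` is
structured and there is a structured optimal policy attaining it. -/
theorem porteus_mdp_analog {S Y M A : Type} [Fintype S] [Fintype Y] [Fintype M] [Fintype A]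
    [Nonempty S] [Nonempty Y] [Nonempty M] [Nonempty A]
    (P : SEP S Y M A) (y' : Y)
    (Vt : Set (S → ℝ)) (hVne : Vt.Nonempty) (hVclosed : IsClosed Vt)
    (Pt : Set (S → A)) (hPt : ∀ π ∈ Pt, ∀ s, π s ∈ P.act s)
    -- P_{y'}(b): structured value preservation
    (hPb : ∀ vb ∈ Vt, P.Hbar y' vb ∈ Vt)
    -- P_{y'}(c): structured policy attainment
    (hPc : ∀ vb ∈ Vt, ∃ π ∈ Pt, ∀ s, P.Hbar y' vb s = P.hy y' s (π s) vb)
    -- the unique fixed point of H̄_{y'}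
    (vstar : S → ℝ) (hfix : ∀ s, vstar s = P.Hbar y' vstar s) :
    vstar ∈ Vt ∧ ∃ π ∈ Pt, ∀ s, vstar s = P.hy y' s (π s) vstar := by
  obtain ⟨v0, hv0⟩ := hVne
  -- one-sided contraction estimate
  have half : ∀ (u v : S → ℝ) (D : ℝ), 0 ≤ D → (∀ s, |u s - v s| ≤ D) →
      ∀ s, P.Hbar y' u s - P.Hbar y' v s ≤ P.β * D := by
    intro u v D hDnn hD s
    obtain ⟨a, ha, hae⟩ := Finset.exists_mem_eq_inf' (P.act_ne s) (fun a => P.hy y' s a v)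
    have hdiff : P.hy y' s a u - P.hy y' s a v
        = P.β * ∑ s', P.p y' s a s' * (u s' - v s') := by
      simp only [SEP.hy, mul_sub, Finset.sum_sub_distrib]
      ring
    have habs : |P.hy y' s a u - P.hy y' s a v| ≤ P.β * D := by
      rw [hdiff, abs_mul, abs_of_nonneg P.β_nonneg]
      have : |∑ s', P.p y' s a s' * (u s' - v s')| ≤ D := by
        calc |∑ s', P.p y' s a s' * (u s' - v s')|
            ≤ ∑ s', |P.p y' s a s' * (u s' - v s')| := Finset.abs_sum_le_sum_abs _ _
          _ ≤ ∑ s', P.p y' s a s' * D := by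
              refine Finset.sum_le_sum fun s' _ => ?_
              rw [abs_mul, abs_of_nonneg (P.p_nonneg _ _ _ _)]
              exact mul_le_mul_of_nonneg_left (hD s') (P.p_nonneg _ _ _ _)
          _ = D := by rw [← Finset.sum_mul, P.p_sum, one_mul]
      exact mul_le_mul_of_nonneg_left this P.β_nonneg
    have h1 : P.Hbar y' u s ≤ P.hy y' s a u := Finset.inf'_le _ ha
    have h2 : P.Hbar y' v s = P.hy y' s a v := hae
    have := (abs_le.mp habs).2
    linarith
  have key : ∀ (u v : S → ℝ) (D : ℝ), (∀ s, |u s - v s| ≤ D) →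
      ∀ s, |P.Hbar y' u s - P.Hbar y' v s| ≤ P.β * D := by
    intro u v D hD s
    have hDnn : 0 ≤ D := le_trans (abs_nonneg _) (hD (Classical.arbitrary S))
    have hD' : ∀ s, |v s - u s| ≤ D := fun s => by rw [abs_sub_comm]; exact hD s
    rw [abs_sub_le_iff]
    exact ⟨half u v D hDnn hD s, half v u D hDnn hD' s⟩
  have iter : ∀ n, (P.Hbar y')^[n] v0 ∈ Vt := by
    intro n; induction n with
    | zero => simpa using hv0
    | succ n ih => rw [Function.iterate_succ_apply']; exact hPb _ ih
  set C := Finset.univ.sup' Finset.univ_nonempty fun s => |v0 s - vstar s| with hCdef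
  have hC : ∀ s, |v0 s - vstar s| ≤ C := fun s => by rw [hCdef]; exact Finset.le_sup' (fun t => |v0 t - vstar t|) (Finset.mem_univ s)
  have hfixH : ∀ s, P.Hbar y' vstar s = vstar s := fun s => (hfix s).symm
  have bound : ∀ n s, |(P.Hbar y')^[n] v0 s - vstar s| ≤ P.β ^ n * C := by
    intro n; induction n with
    | zero => simpa using hC
    | succ n ih =>
      intro s
      rw [Function.iterate_succ_apply']
      have h := key _ vstar (P.β ^ n * C) ih s
      rw [hfixH s] at h
      calc |P.Hbar y' ((P.Hbar y')^[n] v0) s - vstar s| ≤ P.β * (P.β ^ n * C) := h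
        _ = P.β ^ (n + 1) * C := by ring
  have hβ : Filter.Tendsto (fun n => P.β ^ n * C) Filter.atTop (nhds 0) := by
    simpa using
      (tendsto_pow_atTop_nhds_zero_of_lt_one P.β_nonneg P.β_lt_one).mul_const C
  have hconv : Filter.Tendsto (fun n => (P.Hbar y')^[n] v0) Filter.atTop (nhds vstar) := by
    rw [tendsto_pi_nhds]
    intro s
    have h0 : Filter.Tendsto (fun n => |(P.Hbar y')^[n] v0 s - vstar s|)
        Filter.atTop (nhds 0) :=
      squeeze_zero (fun n => abs_nonneg _) (fun n => bound n s) hβ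
    rw [tendsto_iff_dist_tendsto_zero]
    simpa [Real.dist_eq] using h0
  have hvVt : vstar ∈ Vt := hVclosed.mem_of_tendsto hconv (Filter.Eventually.of_forall iter)
  obtain ⟨π, hπ, hπs⟩ := hPc vstar hvVt
  exact ⟨hvVt, π, hπ, fun s => (hfix s).trans (hπs s)⟩
end

section
/- Inheritance property of SEP-POMDPs. Assume: (P(a)) Ṽ is as given (nonempty and closed under pointwise convergence); (B(a)) for every v̄ ∈ Ṽ and every y' ∈ Y, the function (s, a) ↦ h_{y'}(s, a, v̄) belongs to F̃; (B(b)) for every f ∈ F̃, the function s ↦ min_{a ∈ 𝒜 s} f(s, a) belongs to Ṽ; (B(c)) for every f ∈ F̃ there exists π̃ ∈ Π̃ such that min_{a ∈ 𝒜 s} f(s, a) = f(s, π̃ s) for all s ∈ S. Then the unique bounded fixed point v* of H satisfies v*(·, b) ∈ Ṽ for every b ∈ B, and for every b ∈ B there exists π*_b ∈ Π̃ such that v*(s, b) = Σ_{y'} σ(y' | b) * h_{y'}(s, π*_b s, v*(·, λ(y', b))) for all s ∈ S. -/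
open Finset

namespace SEP

variable {S Y M A : Type} [Fintype S] [Fintype Y] [Fintype M] [Fintype A]

lemma sig_nonneg (P : SEP S Y M A) (b : Belief M) (y' : Y) : 0 ≤ P.sig b y' :=
  Finset.sum_nonneg fun μ _ => Finset.sum_nonneg fun μ' _ =>
    mul_nonneg (b.2.1 μ) (P.Q_nonneg μ y' μ')

lemma sig_sum_one (P : SEP S Y M A) (b : Belief M) : ∑ y', P.sig b y' = 1 := by
  unfold sig
  rw [Finset.sum_comm]
  have : ∀ μ : M, ∑ y', ∑ μ', b.1 μ * P.Q μ y' μ' = b.1 μ := by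
    intro μ
    simp only [← Finset.mul_sum]
    rw [P.Q_sum μ, mul_one]
  simp only [this, b.2.2]

/-- Value iteration starting from `v0`. -/
noncomputable def iterH (P : SEP S Y M A) (v0 : S → Belief M → ℝ) : ℕ → S → Belief M → ℝ
  | 0 => v0
  | n + 1 => P.H (P.iterH v0 n)

lemma abs_inf'_sub_inf'_le {t : Finset A} (ht : t.Nonempty) (f g : A → ℝ) {C : ℝ}
    (h : ∀ a ∈ t, |f a - g a| ≤ C) : |t.inf' ht f - t.inf' ht g| ≤ C := by
  rw [abs_sub_le_iff]
  constructor
  · obtain ⟨a, ha, hag⟩ := t.exists_mem_eq_inf' ht g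
    have h2 := (abs_sub_le_iff.mp (h a ha)).1
    have h1 : t.inf' ht f ≤ f a := Finset.inf'_le _ ha
    rw [hag]; linarith
  · obtain ⟨a, ha, haf⟩ := t.exists_mem_eq_inf' ht f
    have h2 := (abs_sub_le_iff.mp (h a ha)).2
    have h1 : t.inf' ht g ≤ g a := Finset.inf'_le _ ha
    rw [haf]; linarith

lemma H_contract (P : SEP S Y M A) (v w : S → Belief M → ℝ) (C : ℝ)
    (hC : ∀ s b, |v s b - w s b| ≤ C) (s : S) (b : Belief M) :
    |P.H v s b - P.H w s b| ≤ P.β * C := by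
  refine abs_inf'_sub_inf'_le _ _ _ fun a _ => ?_
  rw [← Finset.sum_sub_distrib]
  refine (Finset.abs_sum_le_sum_abs _ _).trans ?_
  have key : ∀ y' ∈ (Finset.univ : Finset Y),
      |P.sig b y' * P.hy y' s a (fun s' => v s' (P.lam y' b)) -
        P.sig b y' * P.hy y' s a (fun s' => w s' (P.lam y' b))| ≤ P.sig b y' * (P.β * C) := by
    intro y' _
    rw [← mul_sub, abs_mul, abs_of_nonneg (P.sig_nonneg b y')]
    refine mul_le_mul_of_nonneg_left ?_ (P.sig_nonneg b y')
    have hd : P.hy y' s a (fun s' => v s' (P.lam y' b)) -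
        P.hy y' s a (fun s' => w s' (P.lam y' b)) =
        P.β * ∑ s', P.p y' s a s' * (v s' (P.lam y' b) - w s' (P.lam y' b)) := by
      unfold hy
      have h1 : ∑ s', P.p y' s a s' * (v s' (P.lam y' b) - w s' (P.lam y' b))
          = (∑ s', P.p y' s a s' * v s' (P.lam y' b))
            - ∑ s', P.p y' s a s' * w s' (P.lam y' b) := by
        rw [← Finset.sum_sub_distrib]
        exact Finset.sum_congr rfl fun s' _ => mul_sub _ _ _
      rw [h1]; ring
    rw [hd, abs_mul, abs_of_nonneg P.β_nonneg]
    refine mul_le_mul_of_nonneg_left ?_ P.β_nonneg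
    refine (Finset.abs_sum_le_sum_abs _ _).trans ?_
    have : ∀ s' ∈ (Finset.univ : Finset S),
        |P.p y' s a s' * (v s' (P.lam y' b) - w s' (P.lam y' b))| ≤ P.p y' s a s' * C := by
      intro s' _
      rw [abs_mul, abs_of_nonneg (P.p_nonneg y' s a s')]
      exact mul_le_mul_of_nonneg_left (hC _ _) (P.p_nonneg y' s a s')
    refine (Finset.sum_le_sum this).trans ?_
    rw [← Finset.sum_mul, P.p_sum, one_mul]
  refine (Finset.sum_le_sum key).trans ?_
  rw [← Finset.sum_mul, P.sig_sum_one, one_mul]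

end SEP

/-- **Inheritance property of SEP-POMDPs.** Under P(a), B(a), B(b) and B(c)
(with `Ft` a convex cone of structured functions on `S × A`), the unique
bounded fixed point `vstar` of `H` is structured in `s` for every belief,
and for every belief there is a structured policy attaining the minimum. -/
theorem sep_pomdp_inheritance {S Y M A : Type} [Fintype S] [Fintype Y] [Fintype M] [Fintype A]
    [Nonempty S] [Nonempty Y] [Nonempty M] [Nonempty A]
    (P : SEP S Y M A)
    (Vt : Set (S → ℝ)) (hVne : Vt.Nonempty) (hVclosed : IsClosed Vt)
    (Pt : Set (S → A)) (hPt : ∀ π ∈ Pt, ∀ s, π s ∈ P.act s)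
    -- F̃ is a convex cone of functions on S × A
    (Ft : Set (S × A → ℝ))
    (hFadd : ∀ f ∈ Ft, ∀ g ∈ Ft, (fun x => f x + g x) ∈ Ft)
    (hFsmul : ∀ f ∈ Ft, ∀ t : ℝ, 0 ≤ t → (fun x => t * f x) ∈ Ft)
    -- B(a)
    (hBa : ∀ vb ∈ Vt, ∀ y' : Y, (fun x : S × A => P.hy y' x.1 x.2 vb) ∈ Ft)
    -- B(b)
    (hBb : ∀ f ∈ Ft,
      (fun s => (P.act s).inf' (P.act_ne s) fun a => f (s, a)) ∈ Vt)
    -- B(c)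
    (hBc : ∀ f ∈ Ft, ∃ π ∈ Pt, ∀ s,
      ((P.act s).inf' (P.act_ne s) fun a => f (s, a)) = f (s, π s))
    -- the unique bounded fixed point of H
    (vstar : S → Belief M → ℝ) (hbdd : SEP.Bdd vstar)
    (hfix : ∀ s b, vstar s b = P.H vstar s b) :
    (∀ b, (fun s => vstar s b) ∈ Vt) ∧
    ∀ b : Belief M, ∃ π ∈ Pt, ∀ s,
      vstar s b = ∑ y', P.sig b y' * P.hy y' s (π s) fun s' => vstar s' (P.lam y' b) := by
  classical
  obtain ⟨v0, hv0⟩ := hVne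
  -- the zero function is in Ft
  have hzero : (fun _ : S × A => (0 : ℝ)) ∈ Ft := by
    have := hFsmul _ (hBa v0 hv0 (Classical.arbitrary Y)) 0 le_rfl
    simpa using this
  -- sums of structured one-step functions are structured
  have hsum : ∀ (b : Belief M) (vb : Y → S → ℝ), (∀ y', vb y' ∈ Vt) →
      (fun x : S × A => ∑ y', P.sig b y' * P.hy y' x.1 x.2 (vb y')) ∈ Ft := by
    intro b vb hvb
    have hterm : ∀ y' : Y, (fun x : S × A => P.sig b y' * P.hy y' x.1 x.2 (vb y')) ∈ Ft :=
      fun y' => hFsmul _ (hBa _ (hvb y') y') _ (P.sig_nonneg b y')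
    have key : ∀ t : Finset Y,
        (fun x : S × A => ∑ y' ∈ t, P.sig b y' * P.hy y' x.1 x.2 (vb y')) ∈ Ft := by
      intro t
      induction t using Finset.induction_on with
      | empty => simpa using hzero
      | insert _ _ h ih =>
          simp only [Finset.sum_insert h]
          exact hFadd _ (hterm _) _ ih
    exact key Finset.univ
  -- value iteration from the constant-in-b structured function v0
  set iter : ℕ → S → Belief M → ℝ := P.iterH (fun s _ => v0 s) with hiter
  have hVmem : ∀ n b, (fun s => iter n s b) ∈ Vt := by
    intro n
    induction n with
    | zero => intro b; exact hv0
    | succ n ih =>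
        intro b
        have hf := hsum b (fun y' s' => iter n s' (P.lam y' b)) (fun y' => ih (P.lam y' b))
        exact hBb _ hf
  -- uniform geometric convergence to vstar
  obtain ⟨Cs, hCs⟩ := hbdd
  set C0 : ℝ := Finset.univ.sup' Finset.univ_nonempty (fun s => |v0 s|) + Cs with hC0
  have hbound : ∀ n s b, |iter n s b - vstar s b| ≤ P.β ^ n * C0 := by
    intro n
    induction n with
    | zero =>
        intro s b
        simp only [pow_zero, one_mul, hC0]
        calc |iter 0 s b - vstar s b| ≤ |v0 s| + |vstar s b| := abs_sub _ _
          _ ≤ Finset.univ.sup' Finset.univ_nonempty (fun s => |v0 s|) + Cs := by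
              gcongr
              · exact Finset.le_sup' (fun s => |v0 s|) (Finset.mem_univ s)
              · exact hCs s b
    | succ n ih =>
        intro s b
        have h1 : |P.H (iter n) s b - P.H vstar s b| ≤ P.β * (P.β ^ n * C0) :=
          P.H_contract _ _ _ ih s b
        have h2 : vstar s b = P.H vstar s b := hfix s b
        have : iter (n + 1) s b = P.H (iter n) s b := rfl
        rw [this, h2, pow_succ]
        calc |P.H (iter n) s b - P.H vstar s b| ≤ P.β * (P.β ^ n * C0) := h1
          _ = P.β ^ n * P.β * C0 := by ring
  have htend : ∀ s b, Filter.Tendsto (fun n => iter n s b) Filter.atTop (nhds (vstar s b)) := by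
    intro s b
    have hgeo : Filter.Tendsto (fun n => P.β ^ n * C0) Filter.atTop (nhds 0) := by
      have := (tendsto_pow_atTop_nhds_zero_of_lt_one P.β_nonneg P.β_lt_one).mul_const C0
      simpa using this
    have : Filter.Tendsto (fun n => iter n s b - vstar s b) Filter.atTop (nhds 0) :=
      squeeze_zero_norm (fun n => by simpa [Real.norm_eq_abs] using hbound n s b) hgeo
    have h := this.add_const (vstar s b)
    simpa using h
  have hpart1 : ∀ b, (fun s => vstar s b) ∈ Vt := by
    intro b
    have htd : Filter.Tendsto (fun n => fun s => iter n s b) Filter.atTop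
        (nhds (fun s => vstar s b)) := tendsto_pi_nhds.mpr fun s => htend s b
    exact hVclosed.mem_of_tendsto htd (Filter.Eventually.of_forall fun n => hVmem n b)
  refine ⟨hpart1, fun b => ?_⟩
  have hf : (fun x : S × A =>
      ∑ y', P.sig b y' * P.hy y' x.1 x.2 (fun s' => vstar s' (P.lam y' b))) ∈ Ft :=
    hsum b _ (fun y' => hpart1 (P.lam y' b))
  obtain ⟨π, hπPt, hπ⟩ := hBc _ hf
  refine ⟨π, hπPt, fun s => ?_⟩
  have := hπ s
  rw [hfix s b]
  exact this
end

section
/- Polyhedral partition of the belief space into structured partial-policy regions. Suppose the unique bounded fixed point v* of H is piecewise linear in the belief: for each s ∈ S there is a finite nonempty set Γ(s) of vectors γ : M → ℝ such that v*(s, b) = min_{γ ∈ Γ(s)} Σ_μ b μ * γ μ for all b ∈ B. Then there exist n ∈ ℕ, subsets B₁, …, Bₙ of B whose union is B, each B_j being the intersection of B with finitely many closed halfspaces of the form {b : M → ℝ | Σ_μ b μ * w μ ≤ d} (with w : M → ℝ and d ∈ ℝ), and functions δ₁, …, δₙ : S → A with δ_j s ∈ 𝒜 s for all s, such that for every j,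 every b ∈ B_j, and every s ∈ S, δ_j s attains the minimum in the Bellman operator at (s, b): v*(s, b) = Σ_{y'} σ(y' | b) * h_{y'}(s, δ_j s, v*(·, λ(y', b))). -/
open Finset

namespace SEPaux

open Finset
open scoped Classical

variable {S Y M A : Type} [Fintype S] [Fintype Y] [Fintype M] [Fintype A]

lemma mul_inf' {α : Type*} (s : Finset α) (hs : s.Nonempty) (f : α → ℝ) {c : ℝ} (hc : 0 < c) :
    c * s.inf' hs f = s.inf' hs fun x => c * f x := by
  obtain ⟨x0, hx0, hfx0⟩ := s.exists_mem_eq_inf' hs f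
  apply le_antisymm
  · exact Finset.le_inf' _ _ fun x hx =>
      mul_le_mul_of_nonneg_left (Finset.inf'_le f hx) hc.le
  · calc s.inf' hs (fun x => c * f x) ≤ c * f x0 := Finset.inf'_le _ hx0
      _ = c * s.inf' hs f := by rw [hfx0]

def Lcoef (P : SEP S Y M A) (y' : Y) (γ : M → ℝ) (μ : M) : ℝ :=
  ∑ μ', P.Q μ y' μ' * γ μ'

def Lval (P : SEP S Y M A) (y' : Y) (γ : M → ℝ) (b : Belief M) : ℝ :=
  ∑ μ, b.1 μ * Lcoef P y' γ μ

lemma sig_nonneg (P : SEP S Y M A) (b : Belief M) (y' : Y) : 0 ≤ P.sig b y' :=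
  Finset.sum_nonneg fun μ _ => Finset.sum_nonneg fun μ' _ =>
    mul_nonneg (b.2.1 μ) (P.Q_nonneg _ _ _)

lemma key (P : SEP S Y M A) (vstar : S → Belief M → ℝ)
    (Γ : S → Finset (M → ℝ)) (hΓ : ∀ s, (Γ s).Nonempty)
    (hpl : ∀ s (b : Belief M),
      vstar s b = (Γ s).inf' (hΓ s) fun γ => ∑ μ, b.1 μ * γ μ)
    (y' : Y) (s' : S) (b : Belief M) :
    P.sig b y' * vstar s' (P.lam y' b)
      = (Γ s').inf' (hΓ s') fun γ => Lval P y' γ b := by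
  by_cases h : 0 < P.sig b y'
  · rw [hpl, SEP.lam, dif_pos h, mul_inf' _ _ _ h]
    refine congrArg _ (funext fun γ => ?_)
    simp only
    rw [Finset.mul_sum]
    rw [Finset.sum_congr rfl fun x _ => show P.sig b y' *
        ((∑ μ, b.1 μ * P.Q μ y' x) / P.sig b y' * γ x)
        = (∑ μ, b.1 μ * P.Q μ y' x) * γ x from by
      rw [← mul_assoc, mul_comm (P.sig b y'), div_mul_cancel₀ _ (ne_of_gt h)]]
    simp only [Lval, Lcoef, Finset.sum_mul, Finset.mul_sum]
    rw [Finset.sum_comm]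
    exact Finset.sum_congr rfl fun _ _ => Finset.sum_congr rfl fun _ _ => by ring
  · have hσ : P.sig b y' = 0 := le_antisymm (not_lt.1 h) (sig_nonneg P b y')
    have hz : ∀ μ μ', b.1 μ * P.Q μ y' μ' = 0 := by
      have h1 := (Finset.sum_eq_zero_iff_of_nonneg
        (fun μ _ => Finset.sum_nonneg fun μ' _ =>
          mul_nonneg (b.2.1 μ) (P.Q_nonneg _ _ _))).1 hσ
      intro μ μ'
      exact (Finset.sum_eq_zero_iff_of_nonneg
        (fun μ' _ => mul_nonneg (b.2.1 μ) (P.Q_nonneg μ y' μ'))).1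
        (h1 μ (Finset.mem_univ μ)) μ' (Finset.mem_univ μ')
    have hL : ∀ γ : M → ℝ, Lval P y' γ b = 0 := by
      intro γ
      simp only [Lval, Lcoef, Finset.mul_sum, ← mul_assoc, hz, zero_mul,
        Finset.sum_const_zero]
    rw [hσ, zero_mul, show (fun γ => Lval P y' γ b) = fun _ : M → ℝ => (0:ℝ) from
      funext hL, Finset.inf'_const]

def Gcoef (P : SEP S Y M A) (g : Y × S → M → ℝ) (s : S) (a : A) (μ : M) : ℝ :=
  ∑ y', ((∑ μ', P.Q μ y' μ') * P.c s y' a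
    + P.β * ∑ s', P.p y' s a s' * Lcoef P y' (g (y', s')) μ)

def Gval (P : SEP S Y M A) (g : Y × S → M → ℝ) (s : S) (a : A) (b : Belief M) : ℝ :=
  ∑ μ, b.1 μ * Gcoef P g s a μ

noncomputable def Fval (P : SEP S Y M A) (vstar : S → Belief M → ℝ) (s : S) (a : A) (b : Belief M) : ℝ :=
  ∑ y', P.sig b y' * P.hy y' s a fun s' => vstar s' (P.lam y' b)

lemma Gval_eq (P : SEP S Y M A) (g : Y × S → M → ℝ) (s : S) (a : A) (b : Belief M) :
    Gval P g s a b = ∑ y', (P.sig b y' * P.c s y' a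
      + P.β * ∑ s', P.p y' s a s' * Lval P y' (g (y', s')) b) := by
  unfold Gval Gcoef
  rw [Finset.sum_congr rfl fun μ (_ : μ ∈ univ) => Finset.mul_sum (univ : Finset Y)
    (fun y' => (∑ μ', P.Q μ y' μ') * P.c s y' a
      + P.β * ∑ s', P.p y' s a s' * Lcoef P y' (g (y', s')) μ) (b.1 μ)]
  rw [Finset.sum_comm]
  refine Finset.sum_congr rfl fun y' _ => ?_
  simp only [mul_add, Finset.sum_add_distrib]
  congr 1
  · rw [SEP.sig, Finset.sum_mul]
    exact Finset.sum_congr rfl fun μ _ => by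
      rw [← mul_assoc, Finset.mul_sum, Finset.sum_mul]
  · simp only [Lval, Finset.mul_sum]
    rw [Finset.sum_comm]
    exact Finset.sum_congr rfl fun s' _ => Finset.sum_congr rfl fun μ _ => by ring

lemma Fval_eq (P : SEP S Y M A) (vstar : S → Belief M → ℝ) (s : S) (a : A) (b : Belief M) :
    Fval P vstar s a b = ∑ y', (P.sig b y' * P.c s y' a
      + P.β * ∑ s', P.p y' s a s' * (P.sig b y' * vstar s' (P.lam y' b))) := by
  unfold Fval SEP.hy
  refine Finset.sum_congr rfl fun y' _ => ?_
  rw [mul_add]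
  congr 1
  simp only [Finset.mul_sum]
  exact Finset.sum_congr rfl fun s' _ => by ring

/-- On a belief where `g` is pointwise optimal, `Gval` agrees with `Fval`. -/
lemma Gval_eq_Fval (P : SEP S Y M A) (vstar : S → Belief M → ℝ)
    (Γ : S → Finset (M → ℝ)) (hΓ : ∀ s, (Γ s).Nonempty)
    (hpl : ∀ s (b : Belief M),
      vstar s b = (Γ s).inf' (hΓ s) fun γ => ∑ μ, b.1 μ * γ μ)
    (g : Y × S → M → ℝ) (b : Belief M)
    (hopt : ∀ pr : Y × S, Lval P pr.1 (g pr) b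
      = (Γ pr.2).inf' (hΓ pr.2) fun γ => Lval P pr.1 γ b)
    (s : S) (a : A) :
    Gval P g s a b = Fval P vstar s a b := by
  rw [Gval_eq, Fval_eq]
  refine Finset.sum_congr rfl fun y' _ => ?_
  congr 2
  refine Finset.sum_congr rfl fun s' _ => ?_
  rw [key P vstar Γ hΓ hpl y' s' b, ← hopt (y', s')]

noncomputable def CF (P : SEP S Y M A) (Γ : S → Finset (M → ℝ))
    (δ : S → A) (g : Y × S → M → ℝ) : Finset ((M → ℝ) × ℝ) :=
  ((univ : Finset (Y × S)).biUnion fun pr =>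
    (Γ pr.2).image fun γ =>
      ((fun μ => Lcoef P pr.1 (g pr) μ - Lcoef P pr.1 γ μ), (0:ℝ)))
  ∪ ((univ : Finset S).biUnion fun s =>
    (P.act s).image fun a =>
      ((fun μ => Gcoef P g s (δ s) μ - Gcoef P g s a μ), (0:ℝ)))

def polySet (T : Finset ((M → ℝ) × ℝ)) : Set (Belief M) :=
  {b : Belief M | ∀ i : Fin T.card,
    ∑ μ, b.1 μ * (T.equivFin.symm i).1.1 μ ≤ (T.equivFin.symm i).1.2}

lemma mem_polySet {T : Finset ((M → ℝ) × ℝ)} {b : Belief M} :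
    b ∈ polySet T ↔ ∀ c ∈ T, ∑ μ, b.1 μ * c.1 μ ≤ c.2 := by
  constructor
  · intro hb c hc
    have := hb (T.equivFin ⟨c, hc⟩)
    rwa [Equiv.symm_apply_apply] at this
  · intro hb i
    exact hb _ (T.equivFin.symm i).2

lemma sub_constraint {u v : M → ℝ} {b : Belief M} :
    (∑ μ, b.1 μ * (u μ - v μ) ≤ 0) ↔ ∑ μ, b.1 μ * u μ ≤ ∑ μ, b.1 μ * v μ := by
  have h : ∑ μ, b.1 μ * (u μ - v μ) = ∑ μ, b.1 μ * u μ - ∑ μ, b.1 μ * v μ := by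
    rw [← Finset.sum_sub_distrib]
    exact Finset.sum_congr rfl fun μ _ => by ring
  rw [h, sub_nonpos]

lemma mem_CF (P : SEP S Y M A) (Γ : S → Finset (M → ℝ))
    (δ : S → A) (g : Y × S → M → ℝ) (b : Belief M) :
    b ∈ polySet (CF P Γ δ g) ↔
      ((∀ pr : Y × S, ∀ γ ∈ Γ pr.2, Lval P pr.1 (g pr) b ≤ Lval P pr.1 γ b)
      ∧ (∀ s, ∀ a ∈ P.act s, Gval P g s (δ s) b ≤ Gval P g s a b)) := by
  rw [mem_polySet]
  constructor
  · intro hb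
    constructor
    · intro pr γ hγ
      have := hb _ (Finset.mem_union_left _ (Finset.mem_biUnion.2
        ⟨pr, Finset.mem_univ pr, Finset.mem_image_of_mem _ hγ⟩))
      exact sub_constraint.1 this
    · intro s a ha
      have := hb _ (Finset.mem_union_right _ (Finset.mem_biUnion.2
        ⟨s, Finset.mem_univ s, Finset.mem_image_of_mem _ ha⟩))
      exact sub_constraint.1 this
  · rintro ⟨h1, h2⟩ c hc
    rcases Finset.mem_union.1 hc with hc | hc
    · obtain ⟨pr, -, hc⟩ := Finset.mem_biUnion.1 hc
      obtain ⟨γ, hγ, rfl⟩ := Finset.mem_image.1 hc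
      exact sub_constraint.2 (h1 pr γ hγ)
    · obtain ⟨s, -, hc⟩ := Finset.mem_biUnion.1 hc
      obtain ⟨a, ha, rfl⟩ := Finset.mem_image.1 hc
      exact sub_constraint.2 (h2 s a ha)

end SEPaux
/-- **Polyhedral partition of the belief space into structured partial-policy
regions.** If the value function `vstar` is piecewise linear in the belief,
then the belief space partitions into finitely many regions, each the
intersection of the simplex with finitely many closed halfspaces, on each of
which a single partial policy `δ_j : S → A` attains the Bellman minimum. -/
theorem belief_space_partition {S Y M A : Type} [Fintype S] [Fintype Y] [Fintype M] [Fintype A]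
    [Nonempty S] [Nonempty Y] [Nonempty M] [Nonempty A]
    (P : SEP S Y M A)
    -- the unique bounded fixed point of H
    (vstar : S → Belief M → ℝ) (hbdd : SEP.Bdd vstar)
    (hfix : ∀ s b, vstar s b = P.H vstar s b)
    -- piecewise linearity of vstar in the belief
    (Γ : S → Finset (M → ℝ)) (hΓ : ∀ s, (Γ s).Nonempty)
    (hpl : ∀ s (b : Belief M),
      vstar s b = (Γ s).inf' (hΓ s) fun γ => ∑ μ, b.1 μ * γ μ) :
    ∃ (n : ℕ) (Bs : Fin n → Set (Belief M)) (δ : Fin n → S → A),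
      (∀ b : Belief M, ∃ j, b ∈ Bs j) ∧
      (∀ j, ∃ (k : ℕ) (w : Fin k → M → ℝ) (d : Fin k → ℝ),
        Bs j = {b : Belief M | ∀ i, ∑ μ, b.1 μ * w i μ ≤ d i}) ∧
      (∀ j s, δ j s ∈ P.act s) ∧
      (∀ j, ∀ b ∈ Bs j, ∀ s,
        vstar s b = ∑ y', P.sig b y' * P.hy y' s (δ j s) fun s' => vstar s' (P.lam y' b)) := by
  classical
  set I : Finset ((S → A) × (Y × S → M → ℝ)) :=
    (Fintype.piFinset fun s => P.act s) ×ˢ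
      (Fintype.piFinset fun pr : Y × S => Γ pr.2) with hI
  refine ⟨I.card,
    fun j => SEPaux.polySet (SEPaux.CF P Γ (I.equivFin.symm j).1.1 (I.equivFin.symm j).1.2),
    fun j => (I.equivFin.symm j).1.1, ?_, ?_, ?_, ?_⟩
  · -- coverage
    intro b
    have hg : ∀ pr : Y × S, ∃ γ ∈ Γ pr.2,
        (Γ pr.2).inf' (hΓ pr.2) (fun γ => SEPaux.Lval P pr.1 γ b)
          = SEPaux.Lval P pr.1 γ b :=
      fun pr => Finset.exists_mem_eq_inf' (hΓ pr.2) _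
    choose g hg1 hg2 using hg
    have hδ : ∀ s, ∃ a ∈ P.act s,
        (P.act s).inf' (P.act_ne s) (fun a => SEPaux.Gval P g s a b)
          = SEPaux.Gval P g s a b :=
      fun s => Finset.exists_mem_eq_inf' (P.act_ne s) _
    choose δ0 hδ1 hδ2 using hδ
    have hmem : (δ0, g) ∈ I := by
      rw [hI, Finset.mem_product]
      exact ⟨Fintype.mem_piFinset.2 hδ1, Fintype.mem_piFinset.2 hg1⟩
    refine ⟨I.equivFin ⟨(δ0, g), hmem⟩, ?_⟩
    simp only [Equiv.symm_apply_apply]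
    rw [SEPaux.mem_CF]
    refine ⟨fun pr γ hγ => ?_, fun s a ha => ?_⟩
    · rw [← hg2 pr]
      exact Finset.inf'_le _ hγ
    · rw [← hδ2 s]
      exact Finset.inf'_le _ ha
  · -- polyhedral description
    intro j
    exact ⟨_, _, _, rfl⟩
  · -- feasibility
    intro j s
    have h := Finset.mem_product.1 (I.equivFin.symm j).2
    exact Fintype.mem_piFinset.1 h.1 s
  · -- optimality on each region
    intro j b hb s
    set q := I.equivFin.symm j with hq
    have hqI := Finset.mem_product.1 q.2
    have hgmem : ∀ pr : Y × S, q.1.2 pr ∈ Γ pr.2 := Fintype.mem_piFinset.1 hqI.2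
    have hδmem : q.1.1 s ∈ P.act s := Fintype.mem_piFinset.1 hqI.1 s
    have hb' := (SEPaux.mem_CF P Γ q.1.1 q.1.2 b).1 hb
    have hopt : ∀ pr : Y × S, SEPaux.Lval P pr.1 (q.1.2 pr) b
        = (Γ pr.2).inf' (hΓ pr.2) fun γ => SEPaux.Lval P pr.1 γ b :=
      fun pr => le_antisymm (Finset.le_inf' _ _ fun γ hγ => hb'.1 pr γ hγ)
        (Finset.inf'_le _ (hgmem pr))
    have hGF : ∀ a, SEPaux.Gval P q.1.2 s a b = SEPaux.Fval P vstar s a b :=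
      fun a => SEPaux.Gval_eq_Fval P vstar Γ hΓ hpl q.1.2 b hopt s a
    have h1 : vstar s b
        = (P.act s).inf' (P.act_ne s) fun a => SEPaux.Fval P vstar s a b := hfix s b
    have h2 : (P.act s).inf' (P.act_ne s) (fun a => SEPaux.Fval P vstar s a b)
        = SEPaux.Fval P vstar s (q.1.1 s) b := by
      refine le_antisymm (Finset.inf'_le _ hδmem) (Finset.le_inf' _ _ fun a ha => ?_)
      rw [← hGF a, ← hGF (q.1.1 s)]
      exact hb'.2 s a ha
    exact h1.trans h2
end

section
/- Optimality of myopic policies for SEP-POMDPs. Assume: (i) the cost is separable, i.e. there exist K : Y → A → ℝ and L : S → Y → ℝ with c s y' a = K y' a + L s y' for all s, y', a; (ii) the state transitions do not depend on the current state, i.e. there exists p̄ : Y → A → S → ℝ with p y' s a s' = p̄ y' a s' for all y', s, a, s'; (iii) a* : B → A satisfies, for every b ∈ B, G(b, a*(b)) ≤ G(b, a) for all a ∈ A, where G(b, a) = Σ_{y'} σ(y' | b) * ( K y' a + β * Σ_{y''} σ(y'' | λ(y', b)) * Σ_{s'} p̄ y' a s' * L s' y'' ); (iv) a*(b) ∈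 𝒜 s for every s ∈ S and every b ∈ B. Define the policy-evaluation operator H^{a*} on bounded functions v : S × B → ℝ by (H^{a*} v)(s, b) = Σ_{y'} σ(y' | b) * ( c s y' (a*(b)) + β * Σ_{s'} p y' s (a*(b)) s' * v(s', λ(y', b)) ), a β-contraction with unique bounded fixed point v^{a*}. Then the stationary myopic policy π(s, b) = a*(b) is optimal: v^{a*}(s, b) = v*(s, b) for all (s, b) ∈ S × B. -/
open Finset

/-- **Optimality of myopic policies for SEP-POMDPs.** If the cost is separable,
the transitions do not depend on the current state, and `astar b` minimizes
the myopic objective `G(b, ·)` and is always feasible, then the stationary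
myopic policy `π(s, b) = astar b` is optimal: its policy evaluation `vA`
coincides with the optimal value function `vstar`. -/
theorem myopic_policy_optimal {S Y M A : Type} [Fintype S] [Fintype Y] [Fintype M] [Fintype A]
    [Nonempty S] [Nonempty Y] [Nonempty M] [Nonempty A]
    (P : SEP S Y M A)
    -- (i) separable cost
    (K : Y → A → ℝ) (L : S → Y → ℝ)
    (hc : ∀ s y' a, P.c s y' a = K y' a + L s y')
    -- (ii) state-independent transitions
    (pbar : Y → A → S → ℝ)
    (hp : ∀ y' s a s', P.p y' s a s' = pbar y' a s')
    -- (iii) astar b minimizes G(b, ·)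
    (astar : Belief M → A)
    (hmyopic : ∀ (b : Belief M) (a : A),
      (∑ y', P.sig b y' * (K y' (astar b) +
        P.β * ∑ y'', P.sig (P.lam y' b) y'' * ∑ s', pbar y' (astar b) s' * L s' y'')) ≤
      ∑ y', P.sig b y' * (K y' a +
        P.β * ∑ y'', P.sig (P.lam y' b) y'' * ∑ s', pbar y' a s' * L s' y''))
    -- (iv) astar b is always feasible
    (hfeas : ∀ (s : S) (b : Belief M), astar b ∈ P.act s)
    -- the policy-evaluation fixed point of the myopic policy
    (vA : S → Belief M → ℝ) (hvAbdd : SEP.Bdd vA)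
    (hvA : ∀ s b, vA s b = ∑ y', P.sig b y' *
      (P.c s y' (astar b) + P.β * ∑ s', P.p y' s (astar b) s' * vA s' (P.lam y' b)))
    -- the unique bounded fixed point of H
    (vstar : S → Belief M → ℝ) (hbdd : SEP.Bdd vstar)
    (hfix : ∀ s b, vstar s b = P.H vstar s b) :
    ∀ s b, vA s b = vstar s b := by
  classical
  -- basic facts about sig
  have sig_nonneg : ∀ (b : Belief M) (y' : Y), 0 ≤ P.sig b y' := by
    intro b y'
    exact Finset.sum_nonneg fun μ _ => Finset.sum_nonneg fun μ' _ =>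
      mul_nonneg (b.2.1 μ) (P.Q_nonneg μ y' μ')
  have sig_sum : ∀ b : Belief M, ∑ y', P.sig b y' = 1 := by
    intro b
    unfold SEP.sig
    rw [Finset.sum_comm]
    have : ∀ μ ∈ (Finset.univ : Finset M),
        (∑ y', ∑ μ', b.1 μ * P.Q μ y' μ') = b.1 μ := by
      intro μ _
      simp_rw [← Finset.mul_sum]
      rw [P.Q_sum μ, mul_one]
    rw [Finset.sum_congr rfl this, b.2.2]
  have pbar_sum : ∀ (y' : Y) (a : A), ∑ s', pbar y' a s' = 1 := by
    intro y' a
    have := P.p_sum y' (Classical.arbitrary S) a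
    simpa [hp] using this
  have pbar_nonneg : ∀ (y' : Y) (a : A) (s' : S), 0 ≤ pbar y' a s' := by
    intro y' a s'
    have := P.p_nonneg y' (Classical.arbitrary S) a s'
    simpa [hp] using this
  -- the belief-only part of vA
  set g : Belief M → ℝ := fun b => ∑ y', P.sig b y' * (K y' (astar b) +
      P.β * ∑ s', pbar y' (astar b) s' * vA s' (P.lam y' b)) with hg
  have key : ∀ s b, vA s b = g b + ∑ y', P.sig b y' * L s y' := by
    intro s b
    rw [hvA s b, hg]
    rw [← Finset.sum_add_distrib]
    refine Finset.sum_congr rfl fun y' _ => ?_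
    simp_rw [hc, hp]
    ring
  -- decomposition of the one-step expected value
  have step : ∀ (y' : Y) (a : A) (b'' : Belief M),
      ∑ s', pbar y' a s' * vA s' b'' =
        g b'' + ∑ y'', P.sig b'' y'' * ∑ s', pbar y' a s' * L s' y'' := by
    intro y' a b''
    calc ∑ s', pbar y' a s' * vA s' b''
        = ∑ s', (pbar y' a s' * g b'' + pbar y' a s' * ∑ y'', P.sig b'' y'' * L s' y'') := by
          refine Finset.sum_congr rfl fun s' _ => ?_
          rw [key s' b'']; ring
      _ = (∑ s', pbar y' a s') * g b'' + ∑ s', pbar y' a s' * ∑ y'', P.sig b'' y'' * L s' y'' := by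
          rw [Finset.sum_add_distrib, Finset.sum_mul]
      _ = g b'' + ∑ y'', P.sig b'' y'' * ∑ s', pbar y' a s' * L s' y'' := by
          rw [pbar_sum, one_mul]
          congr 1
          simp_rw [Finset.mul_sum]
          rw [Finset.sum_comm]
          refine Finset.sum_congr rfl fun y'' _ => Finset.sum_congr rfl fun s' _ => ?_
          ring
  -- decomposition of the Bellman objective
  have Fdec : ∀ (s : S) (b : Belief M) (a : A),
      (∑ y', P.sig b y' * P.hy y' s a fun s' => vA s' (P.lam y' b)) =
        (∑ y', P.sig b y' * (K y' a +
          P.β * ∑ y'', P.sig (P.lam y' b) y'' * ∑ s', pbar y' a s' * L s' y'')) +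
        ∑ y', P.sig b y' * (L s y' + P.β * g (P.lam y' b)) := by
    intro s b a
    rw [← Finset.sum_add_distrib]
    refine Finset.sum_congr rfl fun y' _ => ?_
    unfold SEP.hy
    simp_rw [hc, hp]
    rw [step y' a (P.lam y' b)]
    ring
  -- vA is a fixed point of H
  have HvA : ∀ s b, P.H vA s b = vA s b := by
    intro s b
    unfold SEP.H
    apply le_antisymm
    · refine le_trans (Finset.inf'_le _ (hfeas s b)) ?_
      rw [hvA s b]
      simp [SEP.hy]
    · refine Finset.le_inf' _ _ fun a _ => ?_
      have h1 : vA s b = (∑ y', P.sig b y' * P.hy y' s (astar b) fun s' => vA s' (P.lam y' b)) := by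
        rw [hvA s b]; simp [SEP.hy]
      rw [h1, Fdec s b (astar b), Fdec s b a]
      exact add_le_add_left (hmyopic b a) _
  -- contraction estimate
  have contr : ∀ D : ℝ, (∀ s b, |vA s b - vstar s b| ≤ D) →
      ∀ s b, |vA s b - vstar s b| ≤ P.β * D := by
    intro D hbd s b
    have hD : 0 ≤ D := le_trans (abs_nonneg _) (hbd s b)
    have per : ∀ a : A,
        |(∑ y', P.sig b y' * P.hy y' s a fun s' => vA s' (P.lam y' b)) -
         (∑ y', P.sig b y' * P.hy y' s a fun s' => vstar s' (P.lam y' b))| ≤ P.β * D := by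
      intro a
      rw [← Finset.sum_sub_distrib]
      have heq : ∀ y' : Y,
          P.sig b y' * P.hy y' s a (fun s' => vA s' (P.lam y' b)) -
          P.sig b y' * P.hy y' s a (fun s' => vstar s' (P.lam y' b)) =
          P.sig b y' * (P.β * ∑ s', P.p y' s a s' * (vA s' (P.lam y' b) - vstar s' (P.lam y' b))) := by
        intro y'
        have hsub : ∑ s', P.p y' s a s' * (vA s' (P.lam y' b) - vstar s' (P.lam y' b)) =
            (∑ s', P.p y' s a s' * vA s' (P.lam y' b)) -
              ∑ s', P.p y' s a s' * vstar s' (P.lam y' b) := by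
          rw [← Finset.sum_sub_distrib]
          exact Finset.sum_congr rfl fun _ _ => mul_sub _ _ _
        unfold SEP.hy
        rw [hsub]
        ring
      calc |∑ y', (P.sig b y' * P.hy y' s a (fun s' => vA s' (P.lam y' b)) -
              P.sig b y' * P.hy y' s a fun s' => vstar s' (P.lam y' b))|
          ≤ ∑ y', |P.sig b y' * P.hy y' s a (fun s' => vA s' (P.lam y' b)) -
              P.sig b y' * P.hy y' s a fun s' => vstar s' (P.lam y' b)| :=
            Finset.abs_sum_le_sum_abs _ _
        _ ≤ ∑ y', P.sig b y' * (P.β * D) := by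
            refine Finset.sum_le_sum fun y' _ => ?_
            rw [heq y', abs_mul, abs_of_nonneg (sig_nonneg b y')]
            refine mul_le_mul_of_nonneg_left ?_ (sig_nonneg b y')
            rw [abs_mul, abs_of_nonneg P.β_nonneg]
            refine mul_le_mul_of_nonneg_left ?_ P.β_nonneg
            calc |∑ s', P.p y' s a s' * (vA s' (P.lam y' b) - vstar s' (P.lam y' b))|
                ≤ ∑ s', |P.p y' s a s' * (vA s' (P.lam y' b) - vstar s' (P.lam y' b))| :=
                  Finset.abs_sum_le_sum_abs _ _
              _ ≤ ∑ s', P.p y' s a s' * D := by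
                  refine Finset.sum_le_sum fun s' _ => ?_
                  rw [abs_mul, abs_of_nonneg (P.p_nonneg y' s a s')]
                  exact mul_le_mul_of_nonneg_left (hbd s' (P.lam y' b)) (P.p_nonneg y' s a s')
              _ = D := by rw [← Finset.sum_mul, P.p_sum, one_mul]
        _ = P.β * D := by rw [← Finset.sum_mul, sig_sum, one_mul]
    -- now compare the two inf's
    have hfa : vA s b = P.H vA s b := (HvA s b).symm
    rw [hfa, hfix s b]
    unfold SEP.H
    rw [abs_le]
    constructor
    · obtain ⟨a0, ha0mem, ha0⟩ := Finset.exists_mem_eq_inf' (P.act_ne s)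
        (fun a => ∑ y', P.sig b y' * P.hy y' s a fun s' => vA s' (P.lam y' b))
      rw [ha0, neg_le_sub_iff_le_add]
      refine le_trans (Finset.inf'_le _ ha0mem) ?_
      have := abs_le.1 (per a0)
      linarith [this.1]
    · obtain ⟨a0, ha0mem, ha0⟩ := Finset.exists_mem_eq_inf' (P.act_ne s)
        (fun a => ∑ y', P.sig b y' * P.hy y' s a fun s' => vstar s' (P.lam y' b))
      rw [ha0, sub_le_iff_le_add]
      refine le_trans (Finset.inf'_le _ ha0mem) ?_
      have := abs_le.1 (per a0)
      linarith [this.2]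
  -- iterate the contraction
  obtain ⟨C1, hC1⟩ := hvAbdd
  obtain ⟨C2, hC2⟩ := hbdd
  have hC : ∀ s b, |vA s b - vstar s b| ≤ |C1| + |C2| := by
    intro s b
    calc |vA s b - vstar s b| ≤ |vA s b| + |vstar s b| := abs_sub _ _
      _ ≤ |C1| + |C2| := add_le_add (le_trans (hC1 s b) (le_abs_self C1))
          (le_trans (hC2 s b) (le_abs_self C2))
  set C := |C1| + |C2| with hCdef
  have iter : ∀ n : ℕ, ∀ s b, |vA s b - vstar s b| ≤ P.β ^ n * C := by
    intro n
    induction n with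
    | zero => simpa using hC
    | succ n ih =>
        intro s b
        have := contr (P.β ^ n * C) ih s b
        calc |vA s b - vstar s b| ≤ P.β * (P.β ^ n * C) := this
          _ = P.β ^ (n + 1) * C := by ring
  intro s b
  have htend : Filter.Tendsto (fun n : ℕ => P.β ^ n * C) Filter.atTop (nhds 0) := by
    have h0 : Filter.Tendsto (fun n : ℕ => P.β ^ n) Filter.atTop (nhds 0) :=
      tendsto_pow_atTop_nhds_zero_of_lt_one P.β_nonneg P.β_lt_one
    simpa using h0.mul_const C
  have habs : |vA s b - vstar s b| ≤ 0 :=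
    ge_of_tendsto' htend fun n => iter n s b
  have := abs_nonneg (vA s b - vstar s b)
  have : vA s b - vstar s b = 0 := by
    have := abs_eq_zero.1 (le_antisymm habs (abs_nonneg _))
    exact this
  linarith
end

section
/- Inheritance of monotone value functions under the Jiang–Powell conditions. In the finite-horizon SEP-POMDP with horizon T, coupled transition function f, stage costs (c_t) and terminal cost c_T, value functions (v_t) as defined in the context, assume: (JP1) for all s, s̃ ∈ S with s ⪯ s̃ and all a ∈ A, y' ∈ Y, w ∈ W, f s a y' w ⪯ f s̃ a y' w; (JP2) for all s, s̃ ∈ S with s ⪯ s̃, all t < T, all y' ∈ Y and a ∈ A, c_t s y' a ≥ c_t s̃ y' a, and c_T s ≥ c_T s̃. Then for every t ≤ T, every b ∈ B, and all s, s̃ ∈ S with s ⪯ s̃, one has v_t(s, b) ≥ v_t(s̃, b). -/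
open Finset

/-- `σ(y' | b) = ∑ μ, ∑ μ', b μ * Q μ y' μ'`. -/
def sigB {Y M : Type} [Fintype Y] [Fintype M] (Q : M → Y → M → ℝ)
    (b : Belief M) (y' : Y) : ℝ :=
  ∑ μ, ∑ μ', b.1 μ * Q μ y' μ'

/-- The Bayesian belief update `λ(y', b)`. -/
noncomputable def lamB {Y M : Type} [Fintype Y] [Fintype M] (Q : M → Y → M → ℝ)
    (hQ0 : ∀ μ y' μ', 0 ≤ Q μ y' μ') (y' : Y) (b : Belief M) : Belief M :=
  if h : 0 < sigB Q b y' then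
    ⟨fun μ' => (∑ μ, b.1 μ * Q μ y' μ') / sigB Q b y',
      fun μ' => div_nonneg (Finset.sum_nonneg fun μ _ =>
        mul_nonneg (b.2.1 μ) (hQ0 μ y' μ')) h.le,
      by
        rw [← Finset.sum_div, Finset.sum_comm]
        exact div_self (ne_of_gt h)⟩
  else b

/-- **Inheritance of monotone value functions under the Jiang–Powell
conditions.** In the finite-horizon SEP-POMDP with horizon `T`, coupled
transition function `f`, stage costs `ct`, terminal cost `cT`, and value
functions `v` defined by backward recursion, conditions JP1 (monotone
transitions) and JP2 (monotone costs) imply that `v t (·, b)` is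
monotone (antitone in the preorder `le`) for every `t ≤ T` and belief `b`. -/
theorem monotone_value_inheritance
    {S Y M A W : Type} [Fintype S] [Fintype Y] [Fintype M] [Fintype A] [Fintype W]
    [Nonempty S] [Nonempty Y] [Nonempty M] [Nonempty A] [Nonempty W]
    -- `le` is a preorder on S
    (le : S → S → Prop) (hrefl : ∀ s, le s s)
    (htrans : ∀ s₁ s₂ s₃, le s₁ s₂ → le s₂ s₃ → le s₁ s₃)
    -- modulation/observation probabilities
    (Q : M → Y → M → ℝ) (hQ0 : ∀ μ y' μ', 0 ≤ Q μ y' μ')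
    (hQ1 : ∀ μ, ∑ y', ∑ μ', Q μ y' μ' = 1)
    -- noise distribution
    (q : W → ℝ) (hq0 : ∀ w, 0 ≤ q w) (hq1 : ∑ w, q w = 1)
    -- coupled state transition function
    (f : S → A → Y → W → S)
    -- horizon, stage costs, terminal cost
    (T : ℕ) (ct : ℕ → S → Y → A → ℝ) (cT : S → ℝ)
    -- the finite-horizon value functions, defined by backward recursion
    (v : ℕ → S → Belief M → ℝ)
    (hvT : ∀ s b, v T s b = cT s)
    (hvrec : ∀ t, t < T → ∀ s (b : Belief M),
      v t s b = Finset.univ.inf' Finset.univ_nonempty fun a : A =>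
        ∑ y', sigB Q b y' *
          (ct t s y' a + ∑ w, q w * v (t + 1) (f s a y' w) (lamB Q hQ0 y' b)))
    -- JP1: monotone transitions
    (hJP1 : ∀ s sTil, le s sTil → ∀ a y' w, le (f s a y' w) (f sTil a y' w))
    -- JP2: monotone stage and terminal costs
    (hJP2c : ∀ s sTil, le s sTil → ∀ t, t < T → ∀ y' a, ct t sTil y' a ≤ ct t s y' a)
    (hJP2T : ∀ s sTil, le s sTil → cT sTil ≤ cT s) :
    ∀ t, t ≤ T → ∀ (b : Belief M) (s sTil : S), le s sTil → v t sTil b ≤ v t s b := by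
  have key : ∀ d t, t + d = T → ∀ (b : Belief M) (s sTil : S),
      le s sTil → v t sTil b ≤ v t s b := by
    intro d
    induction d with
    | zero =>
      intro t ht b s sTil hle
      have hT : t = T := by omega
      subst hT
      rw [hvT, hvT]
      exact hJP2T s sTil hle
    | succ d ih =>
      intro t ht b s sTil hle
      have htT : t < T := by omega
      rw [hvrec t htT, hvrec t htT]
      rw [Finset.le_inf'_iff]
      intro a _
      refine Finset.inf'_le_of_le _ (Finset.mem_univ a) ?_
      apply Finset.sum_le_sum
      intro y' _
      have hsig : 0 ≤ sigB Q b y' :=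
        Finset.sum_nonneg fun μ _ => Finset.sum_nonneg fun μ' _ =>
          mul_nonneg (b.2.1 μ) (hQ0 μ y' μ')
      apply mul_le_mul_of_nonneg_left _ hsig
      apply add_le_add (hJP2c s sTil hle t htT y' a)
      apply Finset.sum_le_sum
      intro w _
      exact mul_le_mul_of_nonneg_left
        (ih (t + 1) (by omega) _ _ _ (hJP1 s sTil hle a y' w)) (hq0 w)
  intro t ht
  exact key (T - t) t (by omega)
end

section
/- Information-relaxation lower bound. Let H_M be the operator on functions v : S × M → ℝ defined by (H_M v)(s, μ) = min_{a ∈ 𝒜 s} Σ_{y', μ'} Q μ y' μ' * ( c s y' a + β * Σ_{s'} p y' s a s' * v(s', μ') ); H_M is a β-contraction with unique fixed point v_M. Then for every s ∈ S and every b ∈ B: Σ_μ b μ * v_M(s, μ) ≤ v*(s, b). -/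
open Finset

/-- The information-relaxation operator `H_M` on functions `S × M → ℝ`. -/
noncomputable def SEP.HM {S Y M A : Type} [Fintype S] [Fintype Y] [Fintype M] [Fintype A]
    (P : SEP S Y M A) (v : S → M → ℝ) (s : S) (μ : M) : ℝ :=
  (P.act s).inf' (P.act_ne s) fun a =>
    ∑ y', ∑ μ', P.Q μ y' μ' * (P.c s y' a + P.β * ∑ s', P.p y' s a s' * v s' μ')

/-- **Information-relaxation lower bound.** The fixed point `vM` of the
relaxed operator `H_M` gives a lower bound on the SEP-POMDP value function:
`∑ μ, b μ * vM s μ ≤ vstar s b` for all states `s` and beliefs `b`. -/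
theorem information_relaxation_lower_bound
    {S Y M A : Type} [Fintype S] [Fintype Y] [Fintype M] [Fintype A]
    [Nonempty S] [Nonempty Y] [Nonempty M] [Nonempty A]
    (P : SEP S Y M A)
    -- the unique fixed point of H_M
    (vM : S → M → ℝ) (hvM : ∀ s μ, vM s μ = P.HM vM s μ)
    -- the unique bounded fixed point of H
    (vstar : S → Belief M → ℝ) (hbdd : SEP.Bdd vstar)
    (hfix : ∀ s b, vstar s b = P.H vstar s b) :
    ∀ (s : S) (b : Belief M), ∑ μ, b.1 μ * vM s μ ≤ vstar s b := by
  classical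
  set g : S → Belief M → ℝ := fun s b => ∑ μ, b.1 μ * vM s μ with hg
  have sig_nonneg : ∀ (b : Belief M) (y' : Y), 0 ≤ P.sig b y' := fun b y' =>
    Finset.sum_nonneg fun μ _ => Finset.sum_nonneg fun μ' _ =>
      mul_nonneg (b.2.1 μ) (P.Q_nonneg μ y' μ')
  have sig_sum : ∀ (b : Belief M), ∑ y', P.sig b y' = 1 := by
    intro b
    unfold SEP.sig
    rw [Finset.sum_comm]
    calc ∑ μ, ∑ y', ∑ μ', b.1 μ * P.Q μ y' μ'
        = ∑ μ, b.1 μ * ∑ y', ∑ μ', P.Q μ y' μ' := by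
          refine Finset.sum_congr rfl fun μ _ => ?_
          rw [Finset.mul_sum]
          exact Finset.sum_congr rfl fun y' _ => by rw [Finset.mul_sum]
      _ = ∑ μ, b.1 μ := by
          refine Finset.sum_congr rfl fun μ _ => ?_
          rw [P.Q_sum μ, mul_one]
      _ = 1 := b.2.2
  -- step lemma: H is monotone up to β-scaled constants
  have hstep : ∀ (v w : S → Belief M → ℝ) (K : ℝ), 0 ≤ K →
      (∀ s b, v s b ≤ w s b + K) → ∀ s b, P.H v s b ≤ P.H w s b + P.β * K := by
    intro v w K hK hvw s b
    have hy_le : ∀ (y' : Y) (a : A) (L : Belief M),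
        P.hy y' s a (fun s' => v s' L) ≤ P.hy y' s a (fun s' => w s' L) + P.β * K := by
      intro y' a L
      unfold SEP.hy
      have hsum : ∑ s', P.p y' s a s' * v s' L ≤ (∑ s', P.p y' s a s' * w s' L) + K := by
        calc ∑ s', P.p y' s a s' * v s' L
            ≤ ∑ s', P.p y' s a s' * (w s' L + K) :=
              Finset.sum_le_sum fun s' _ =>
                mul_le_mul_of_nonneg_left (hvw s' L) (P.p_nonneg y' s a s')
          _ = (∑ s', P.p y' s a s' * w s' L) + (∑ s', P.p y' s a s') * K := by
              simp [mul_add, Finset.sum_add_distrib, Finset.sum_mul]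
          _ = (∑ s', P.p y' s a s' * w s' L) + K := by rw [P.p_sum]; ring
      nlinarith [P.β_nonneg]
    unfold SEP.H
    obtain ⟨a, ha, hEq⟩ := Finset.exists_mem_eq_inf' (P.act_ne s)
      (fun a => ∑ y', P.sig b y' * P.hy y' s a fun s' => w s' (P.lam y' b))
    rw [hEq]
    calc ((P.act s).inf' (P.act_ne s) fun a =>
            ∑ y', P.sig b y' * P.hy y' s a fun s' => v s' (P.lam y' b))
        ≤ ∑ y', P.sig b y' * P.hy y' s a fun s' => v s' (P.lam y' b) :=
          Finset.inf'_le _ ha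
      _ ≤ ∑ y', P.sig b y' * (P.hy y' s a (fun s' => w s' (P.lam y' b)) + P.β * K) :=
          Finset.sum_le_sum fun y' _ =>
            mul_le_mul_of_nonneg_left (hy_le y' a (P.lam y' b)) (sig_nonneg b y')
      _ = (∑ y', P.sig b y' * P.hy y' s a fun s' => w s' (P.lam y' b))
            + (∑ y', P.sig b y') * (P.β * K) := by
          simp [mul_add, Finset.sum_add_distrib, Finset.sum_mul]
      _ = (∑ y', P.sig b y' * P.hy y' s a fun s' => w s' (P.lam y' b)) + P.β * K := by
          rw [sig_sum b]; ring
  -- the key per-observation identity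
  have key_y : ∀ (b : Belief M) (y' : Y) (s : S) (a : A),
      (∑ μ, b.1 μ * ∑ μ', P.Q μ y' μ' *
          (P.c s y' a + P.β * ∑ s', P.p y' s a s' * vM s' μ'))
      = P.sig b y' * P.hy y' s a (fun s' => g s' (P.lam y' b)) := by
    intro b y' s a
    set W : M → ℝ := fun μ' => ∑ μ, b.1 μ * P.Q μ y' μ' with hW
    have hLHS : (∑ μ, b.1 μ * ∑ μ', P.Q μ y' μ' *
          (P.c s y' a + P.β * ∑ s', P.p y' s a s' * vM s' μ'))
        = P.sig b y' * P.c s y' a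
          + P.β * ∑ μ', W μ' * ∑ s', P.p y' s a s' * vM s' μ' := by
      have h1 : ∀ μ, b.1 μ * ∑ μ', P.Q μ y' μ' *
            (P.c s y' a + P.β * ∑ s', P.p y' s a s' * vM s' μ')
          = ∑ μ', (b.1 μ * P.Q μ y' μ' * P.c s y' a
            + b.1 μ * P.Q μ y' μ' * (P.β * ∑ s', P.p y' s a s' * vM s' μ')) := by
        intro μ
        rw [Finset.mul_sum]
        exact Finset.sum_congr rfl fun μ' _ => by ring
      rw [Finset.sum_congr rfl fun μ _ => h1 μ]
      rw [Finset.sum_comm]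
      simp only [Finset.sum_add_distrib]
      congr 1
      · unfold SEP.sig
        rw [Finset.sum_comm, Finset.sum_mul]
        exact Finset.sum_congr rfl fun μ' _ => by rw [Finset.sum_mul]
      · refine Eq.trans ?_ (Finset.mul_sum Finset.univ
          (fun μ' => W μ' * ∑ s', P.p y' s a s' * vM s' μ') P.β).symm
        refine Finset.sum_congr rfl fun μ' _ => ?_
        rw [← Finset.sum_mul]
        simp only [hW]
        ring
    rw [hLHS]
    by_cases h : 0 < P.sig b y'
    · unfold SEP.hy
      have hl1 : ∀ μ', (P.lam y' b).1 μ' = (∑ μ, b.1 μ * P.Q μ y' μ') / P.sig b y' := by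
        intro μ'
        simp only [SEP.lam, dif_pos h]
      have hgval : ∀ s', g s' (P.lam y' b)
          = (∑ μ', W μ' * vM s' μ') / P.sig b y' := by
        intro s'
        simp only [hg]
        rw [Finset.sum_div]
        refine Finset.sum_congr rfl fun μ' _ => ?_
        rw [hl1 μ']
        simp only [hW]
        ring
      simp only [hgval]
      have hfub : ∑ s', P.p y' s a s' * ((∑ μ', W μ' * vM s' μ') / P.sig b y')
          = (∑ μ', W μ' * ∑ s', P.p y' s a s' * vM s' μ') / P.sig b y' := by
        calc ∑ s', P.p y' s a s' * ((∑ μ', W μ' * vM s' μ') / P.sig b y')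
            = ∑ s', ∑ μ', P.p y' s a s' * (W μ' * vM s' μ') / P.sig b y' := by
              refine Finset.sum_congr rfl fun s' _ => ?_
              rw [Finset.sum_div, Finset.mul_sum]
              exact Finset.sum_congr rfl fun μ' _ => by ring
          _ = ∑ μ', ∑ s', P.p y' s a s' * (W μ' * vM s' μ') / P.sig b y' :=
              Finset.sum_comm
          _ = ∑ μ', W μ' * (∑ s', P.p y' s a s' * vM s' μ') / P.sig b y' := by
              refine Finset.sum_congr rfl fun μ' _ => ?_
              rw [Finset.mul_sum, Finset.sum_div]
              exact Finset.sum_congr rfl fun s' _ => by ring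
          _ = (∑ μ', W μ' * ∑ s', P.p y' s a s' * vM s' μ') / P.sig b y' := by
              rw [Finset.sum_div]
      rw [hfub]
      have hσne : P.sig b y' ≠ 0 := ne_of_gt h
      field_simp
    · have hσ0 : P.sig b y' = 0 := le_antisymm (not_lt.mp h) (sig_nonneg b y')
      have hz : ∀ μ μ', b.1 μ * P.Q μ y' μ' = 0 := by
        intro μ μ'
        have h1 := (Finset.sum_eq_zero_iff_of_nonneg (fun μ _ =>
          Finset.sum_nonneg fun μ' _ =>
            mul_nonneg (b.2.1 μ) (P.Q_nonneg μ y' μ'))).mp hσ0 μ (Finset.mem_univ μ)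
        exact (Finset.sum_eq_zero_iff_of_nonneg (fun μ' _ =>
          mul_nonneg (b.2.1 μ) (P.Q_nonneg μ y' μ'))).mp h1 μ' (Finset.mem_univ μ')
      have hW0 : ∀ μ', W μ' = 0 := fun μ' =>
        Finset.sum_eq_zero fun μ _ => hz μ μ'
      rw [hσ0]
      simp [hW0]
  -- subsolution property
  have hsub : ∀ s b, g s b ≤ P.H g s b := by
    intro s b
    unfold SEP.H
    rw [Finset.le_inf'_iff]
    intro a ha
    have h1 : g s b ≤ ∑ μ, b.1 μ * ∑ y', ∑ μ', P.Q μ y' μ' *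
        (P.c s y' a + P.β * ∑ s', P.p y' s a s' * vM s' μ') := by
      refine Finset.sum_le_sum fun μ _ => ?_
      refine mul_le_mul_of_nonneg_left ?_ (b.2.1 μ)
      rw [hvM s μ]
      exact Finset.inf'_le _ ha
    refine h1.trans (le_of_eq ?_)
    calc ∑ μ, b.1 μ * ∑ y', ∑ μ', P.Q μ y' μ' *
          (P.c s y' a + P.β * ∑ s', P.p y' s a s' * vM s' μ')
        = ∑ y', ∑ μ, b.1 μ * ∑ μ', P.Q μ y' μ' *
          (P.c s y' a + P.β * ∑ s', P.p y' s a s' * vM s' μ') := by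
          rw [Finset.sum_congr rfl fun μ _ => Finset.mul_sum (Finset.univ) _ (b.1 μ)]
          exact Finset.sum_comm
      _ = ∑ y', P.sig b y' * P.hy y' s a fun s' => g s' (P.lam y' b) :=
          Finset.sum_congr rfl fun y' _ => key_y b y' s a
  -- boundedness of g and the gap
  obtain ⟨C, hC⟩ := hbdd
  set Cv : ℝ := ∑ s, ∑ μ, |vM s μ| with hCv
  have hvMb : ∀ s μ, |vM s μ| ≤ Cv := by
    intro s μ
    calc |vM s μ| ≤ ∑ μ, |vM s μ| :=
          Finset.single_le_sum (f := fun μ => |vM s μ|) (fun μ _ => abs_nonneg _) (Finset.mem_univ μ)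
      _ ≤ Cv :=
          Finset.single_le_sum (f := fun s => ∑ μ, |vM s μ|)
            (fun s _ => Finset.sum_nonneg fun μ _ => abs_nonneg _)
            (Finset.mem_univ s)
  have hgb : ∀ s (b : Belief M), |g s b| ≤ Cv := by
    intro s b
    calc |g s b| ≤ ∑ μ, |b.1 μ * vM s μ| := Finset.abs_sum_le_sum_abs _ _
      _ ≤ ∑ μ, b.1 μ * Cv := by
          refine Finset.sum_le_sum fun μ _ => ?_
          rw [abs_mul, abs_of_nonneg (b.2.1 μ)]
          exact mul_le_mul_of_nonneg_left (hvMb s μ) (b.2.1 μ)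
      _ = Cv := by rw [← Finset.sum_mul, b.2.2, one_mul]
  set D : ℝ := Cv + C with hD
  have hCv0 : 0 ≤ Cv :=
    Finset.sum_nonneg fun s _ => Finset.sum_nonneg fun μ _ => abs_nonneg _
  have hC0 : 0 ≤ C := by
    have b0 : Belief M := ⟨fun μ => if μ = Classical.arbitrary M then 1 else 0,
      fun μ => by by_cases hμ : μ = Classical.arbitrary M <;> simp [hμ], by simp⟩
    exact (abs_nonneg _).trans (hC (Classical.arbitrary S) b0)
  have hD0 : 0 ≤ D := by simp only [hD]; linarith
  have hinit : ∀ s b, g s b ≤ vstar s b + D := by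
    intro s b
    have h1 := hgb s b
    have h2 := hC s b
    rw [abs_le] at h1 h2
    simp only [hD]; linarith [h1.2, h2.1]
  -- iterate
  have key : ∀ n s b, g s b ≤ vstar s b + P.β ^ n * D := by
    intro n
    induction n with
    | zero => intro s b; simpa using hinit s b
    | succ n ih =>
      intro s b
      have h1 := hsub s b
      have h2 := hstep g vstar (P.β ^ n * D)
        (mul_nonneg (pow_nonneg P.β_nonneg n) hD0) ih s b
      rw [← hfix s b] at h2
      calc g s b ≤ P.H g s b := h1
        _ ≤ vstar s b + P.β * (P.β ^ n * D) := h2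
        _ = vstar s b + P.β ^ (n + 1) * D := by ring
  -- take the limit
  intro s b
  have hlim : Filter.Tendsto (fun n => vstar s b + P.β ^ n * D) Filter.atTop
      (nhds (vstar s b)) := by
    have h1 : Filter.Tendsto (fun n : ℕ => P.β ^ n) Filter.atTop (nhds 0) :=
      tendsto_pow_atTop_nhds_zero_of_lt_one P.β_nonneg P.β_lt_one
    have := (h1.mul_const D).const_add (vstar s b)
    simpa using this
  exact ge_of_tendsto hlim (Filter.Eventually.of_forall fun n => key n s b)
end

section
/- Heuristic lower bound via observation-indexed value functions. Let (ṽ_{y'})_{y' ∈ Y} be the unique family of bounded functions ṽ_{y'} : S × B → ℝ satisfying, for all y' ∈ Y, s ∈ S, b ∈ B: ṽ_{y'}(s, b) = min_{a ∈ 𝒜 s} ( c s y' a + β * Σ_{s'} p y' s a s' * Σ_{y''} σ(y'' | λ(y', b)) * ṽ_{y''}(s', λ(y', b)) ) (such a family exists and is unique since the defining system is a β-contraction in the sup norm on bounded functions Y × S × B → ℝ). Then for every s ∈ S and every b ∈ B: v*(s, b) ≥ Σ_{y'} σ(y' | b) * ṽ_{y'}(s, b). -/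
open Finset

/-- **Heuristic lower bound via observation-indexed value functions.** If
`(vt y')_{y' ∈ Y}` is the (unique bounded) family of observation-indexed
value functions satisfying the coupled fixed-point system, then
`∑ y', σ(y' | b) * vt y' s b ≤ vstar s b` for all `s` and `b`. -/
theorem heuristic_lower_bound
    {S Y M A : Type} [Fintype S] [Fintype Y] [Fintype M] [Fintype A]
    [Nonempty S] [Nonempty Y] [Nonempty M] [Nonempty A]
    (P : SEP S Y M A)
    -- the observation-indexed family and its fixed-point system
    (vt : Y → S → Belief M → ℝ)
    (hvtbdd : ∃ C, ∀ y' s b, |vt y' s b| ≤ C)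
    (hvt : ∀ (y' : Y) (s : S) (b : Belief M),
      vt y' s b = (P.act s).inf' (P.act_ne s) fun a =>
        P.c s y' a + P.β * ∑ s', P.p y' s a s' *
          ∑ y'', P.sig (P.lam y' b) y'' * vt y'' s' (P.lam y' b))
    -- the unique bounded fixed point of H
    (vstar : S → Belief M → ℝ) (hbdd : SEP.Bdd vstar)
    (hfix : ∀ s b, vstar s b = P.H vstar s b) :
    ∀ (s : S) (b : Belief M), ∑ y', P.sig b y' * vt y' s b ≤ vstar s b := by

  classical
  obtain ⟨C, hC⟩ := hvtbdd
  obtain ⟨C', hC'⟩ := hbdd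
  set w : S → Belief M → ℝ := fun s b => ∑ y', P.sig b y' * vt y' s b with hw
  have sig_nonneg : ∀ (b : Belief M) (y' : Y), 0 ≤ P.sig b y' := fun b y' =>
    Finset.sum_nonneg fun μ _ => Finset.sum_nonneg fun μ' _ =>
      mul_nonneg (b.2.1 μ) (P.Q_nonneg μ y' μ')
  have sig_sum : ∀ b : Belief M, ∑ y', P.sig b y' = 1 := by
    intro b
    unfold SEP.sig
    rw [Finset.sum_comm]
    have : ∀ μ : M, ∑ y', ∑ μ', b.1 μ * P.Q μ y' μ' = b.1 μ := by
      intro μ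
      simp only [← Finset.mul_sum]
      rw [P.Q_sum μ, mul_one]
    simp only [this]
    exact b.2.2
  -- w ≤ H w
  have hle : ∀ (s : S) (b : Belief M), w s b ≤ P.H w s b := by
    intro s b
    apply Finset.le_inf'
    intro a ha
    apply Finset.sum_le_sum
    intro y' _
    refine mul_le_mul_of_nonneg_left ?_ (sig_nonneg b y')
    rw [hvt]
    exact Finset.inf'_le _ ha
  -- the set of gaps
  obtain ⟨μ0⟩ := (inferInstance : Nonempty M)
  have : Nonempty (Belief M) := ⟨⟨fun μ => if μ = μ0 then 1 else 0,
    fun μ => by dsimp only; split <;> norm_num, by simp⟩⟩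
  set T : Set ℝ := Set.range (fun sb : S × Belief M => w sb.1 sb.2 - vstar sb.1 sb.2) with hT
  have hTne : T.Nonempty := Set.range_nonempty _
  have hwbd : ∀ (s : S) (b : Belief M), w s b ≤ C := by
    intro s b
    calc w s b ≤ ∑ y', P.sig b y' * C := by
          apply Finset.sum_le_sum
          intro y' _
          exact mul_le_mul_of_nonneg_left (le_trans (le_abs_self _) (hC y' s b)) (sig_nonneg b y')
      _ = C := by rw [← Finset.sum_mul, sig_sum b, one_mul]
  have hbddT : BddAbove T := by
    refine ⟨C + C', ?_⟩
    rintro x ⟨⟨s, b⟩, rfl⟩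
    have := hC' s b
    have := hwbd s b
    simp only []
    have hv : -vstar s b ≤ C' := by
      have := abs_le.mp (hC' s b)
      linarith [this.1]
    linarith
  set D := sSup T with hD
  have hmemD : ∀ (s : S) (b : Belief M), w s b - vstar s b ≤ D := fun s b =>
    le_csSup hbddT ⟨(s, b), rfl⟩
  have key : ∀ (s : S) (b : Belief M), w s b - vstar s b ≤ P.β * D := by
    intro s b
    rw [hfix]
    obtain ⟨a0, ha0, hGa⟩ := Finset.exists_mem_eq_inf' (P.act_ne s)
      (fun a => ∑ y', P.sig b y' * P.hy y' s a fun s' => vstar s' (P.lam y' b))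
    have h1 : P.H w s b ≤ ∑ y', P.sig b y' * P.hy y' s a0 fun s' => w s' (P.lam y' b) :=
      Finset.inf'_le _ ha0
    have h2 : ∀ y' : Y, P.hy y' s a0 (fun s' => w s' (P.lam y' b)) ≤
        P.hy y' s a0 (fun s' => vstar s' (P.lam y' b)) + P.β * D := by
      intro y'
      unfold SEP.hy
      have hsum : ∑ s', P.p y' s a0 s' * w s' (P.lam y' b) ≤
          ∑ s', P.p y' s a0 s' * (vstar s' (P.lam y' b) + D) := by
        apply Finset.sum_le_sum
        intro s' _
        refine mul_le_mul_of_nonneg_left ?_ (P.p_nonneg y' s a0 s')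
        linarith [hmemD s' (P.lam y' b)]
      have heq : ∑ s', P.p y' s a0 s' * (vstar s' (P.lam y' b) + D) =
          (∑ s', P.p y' s a0 s' * vstar s' (P.lam y' b)) + D := by
        simp only [mul_add, Finset.sum_add_distrib, ← Finset.sum_mul, P.p_sum, one_mul]
      have := mul_le_mul_of_nonneg_left (hsum.trans_eq heq) P.β_nonneg
      linarith [this]
    have h3 : (∑ y', P.sig b y' * P.hy y' s a0 fun s' => w s' (P.lam y' b)) ≤
        (∑ y', P.sig b y' * P.hy y' s a0 fun s' => vstar s' (P.lam y' b)) + P.β * D := by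
      have : (∑ y', P.sig b y' * P.hy y' s a0 fun s' => w s' (P.lam y' b)) ≤
          ∑ y', P.sig b y' * (P.hy y' s a0 (fun s' => vstar s' (P.lam y' b)) + P.β * D) := by
        apply Finset.sum_le_sum
        intro y' _
        exact mul_le_mul_of_nonneg_left (h2 y') (sig_nonneg b y')
      have heq : (∑ y', P.sig b y' * (P.hy y' s a0 (fun s' => vstar s' (P.lam y' b)) + P.β * D)) =
          (∑ y', P.sig b y' * P.hy y' s a0 fun s' => vstar s' (P.lam y' b)) + P.β * D := by
        simp only [mul_add, Finset.sum_add_distrib, ← Finset.sum_mul, sig_sum b, one_mul]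
      linarith [this.trans_eq heq]
    have hHv : P.H vstar s b = ∑ y', P.sig b y' * P.hy y' s a0 fun s' => vstar s' (P.lam y' b) := hGa
    have := hle s b
    rw [hHv]
    linarith [h1, h3]
  have hDle : D ≤ P.β * D := by
    apply csSup_le hTne
    rintro x ⟨⟨s, b⟩, rfl⟩
    exact key s b
  have hD0 : D ≤ 0 := by nlinarith [P.β_lt_one, P.β_nonneg]
  intro s b
  have := hmemD s b
  have hwsb : w s b = ∑ y', P.sig b y' * vt y' s b := rfl
  linarith [this, hD0]
end

section
/- Separability factorization of the joint transition under the SEP-POMDP conditioning assumptions. Define, for the separable joint kernel P s μ a (y', s', μ') = p y' s a s' * Q μ y' μ', the marginal φ(y', s' | s, b, a) = Σ_{μ, μ'} b μ * P s μ a (y', s', μ'). Then: (1) φ(y', s' | s, b, a) = p y' s a s' * σ(y' | b) for all y', s', s, a and b ∈ B; and (2) the posterior is independent of the state, next state, and action: whenever φ(y', s' | s, b, a) ≠ 0, for every μ' ∈ M one has (Σ_μ b μ * P s μ a (y', s', μ')) / φ(y', s' | s, b, a) = (Σ_μ b μ * Q μ y' μ') / σ(y' | b); in particular, for any two triples (s,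 a, s') and (s̄, ā, s̄') with φ(y', s' | s, b, a) ≠ 0 and φ(y', s̄' | s̄, b, ā) ≠ 0, the corresponding posteriors coincide. -/
open Finset

/-- The separable joint transition kernel
`P[y', s', μ' | s, μ, a] = p y' s a s' * Q μ y' μ'`. -/
def jointP {S Y M A : Type} (p : Y → S → A → S → ℝ) (Q : M → Y → M → ℝ)
    (s : S) (μ : M) (a : A) (y' : Y) (s' : S) (μ' : M) : ℝ :=
  p y' s a s' * Q μ y' μ'

/-- The marginal `φ(y', s' | s, b, a) = ∑ μ, ∑ μ', b μ * P[y', s', μ' | s, μ, a]`. -/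
def phi {S Y M A : Type} [Fintype M] (p : Y → S → A → S → ℝ) (Q : M → Y → M → ℝ)
    (y' : Y) (s' : S) (s : S) (b : M → ℝ) (a : A) : ℝ :=
  ∑ μ, ∑ μ', b μ * jointP p Q s μ a y' s' μ'

/-- `σ(y' | b) = ∑ μ, ∑ μ', b μ * Q μ y' μ'`. -/
def sigP {Y M : Type} [Fintype M] (Q : M → Y → M → ℝ) (b : M → ℝ) (y' : Y) : ℝ :=
  ∑ μ, ∑ μ', b μ * Q μ y' μ'

/-- **Separability factorization under the SEP-POMDP conditioning
assumptions.** (1) The marginal factorizes as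
`φ(y', s' | s, b, a) = p y' s a s' * σ(y' | b)`; (2) whenever
`φ(y', s' | s, b, a) ≠ 0`, the posterior belief is independent of `s`, `s'`
and `a`; in particular (3) the posteriors for any two triples coincide. -/
theorem separability_factorization
    {S Y M A : Type} [Fintype S] [Fintype Y] [Fintype M] [Fintype A]
    [Nonempty S] [Nonempty Y] [Nonempty M] [Nonempty A]
    (p : Y → S → A → S → ℝ) (hp0 : ∀ y' s a s', 0 ≤ p y' s a s')
    (hp1 : ∀ y' s a, ∑ s', p y' s a s' = 1)
    (Q : M → Y → M → ℝ) (hQ0 : ∀ μ y' μ', 0 ≤ Q μ y' μ')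
    (hQ1 : ∀ μ, ∑ y', ∑ μ', Q μ y' μ' = 1)
    (b : M → ℝ) (hb0 : ∀ μ, 0 ≤ b μ) (hb1 : ∑ μ, b μ = 1) :
    (∀ (y' : Y) (s' s : S) (a : A),
      phi p Q y' s' s b a = p y' s a s' * sigP Q b y') ∧
    (∀ (y' : Y) (s' s : S) (a : A), phi p Q y' s' s b a ≠ 0 → ∀ μ' : M,
      (∑ μ, b μ * jointP p Q s μ a y' s' μ') / phi p Q y' s' s b a =
        (∑ μ, b μ * Q μ y' μ') / sigP Q b y') ∧
    (∀ (y' : Y) (s sBar s' sBar' : S) (a aBar : A),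
      phi p Q y' s' s b a ≠ 0 → phi p Q y' sBar' sBar b aBar ≠ 0 → ∀ μ' : M,
      (∑ μ, b μ * jointP p Q s μ a y' s' μ') / phi p Q y' s' s b a =
        (∑ μ, b μ * jointP p Q sBar μ aBar y' sBar' μ') / phi p Q y' sBar' sBar b aBar) := by
  
  have hfac : ∀ (y' : Y) (s' s : S) (a : A),
      phi p Q y' s' s b a = p y' s a s' * sigP Q b y' := by
    intro y' s' s a
    simp only [phi, sigP, jointP, Finset.mul_sum]
    refine Finset.sum_congr rfl fun μ _ => Finset.sum_congr rfl fun μ' _ => by ring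
  have hnum : ∀ (y' : Y) (s' s : S) (a : A) (μ' : M),
      (∑ μ, b μ * jointP p Q s μ a y' s' μ') = p y' s a s' * ∑ μ, b μ * Q μ y' μ' := by
    intro y' s' s a μ'
    rw [Finset.mul_sum]
    refine Finset.sum_congr rfl fun μ _ => ?_
    simp [jointP]; ring
  have hpost : ∀ (y' : Y) (s' s : S) (a : A), phi p Q y' s' s b a ≠ 0 → ∀ μ' : M,
      (∑ μ, b μ * jointP p Q s μ a y' s' μ') / phi p Q y' s' s b a =
        (∑ μ, b μ * Q μ y' μ') / sigP Q b y' := by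
    intro y' s' s a hφ μ'
    have hp : p y' s a s' ≠ 0 := by
      intro h; apply hφ; rw [hfac, h, zero_mul]
    rw [hnum, hfac, mul_div_mul_left _ _ hp]
  refine ⟨hfac, hpost, ?_⟩
  intro y' s sBar s' sBar' a aBar h1 h2 μ'
  rw [hpost y' s' s a h1 μ', hpost y' sBar' sBar aBar h2 μ']
end
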